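/- arXiv:1410.7977 — 6 statements merged into one kernel-verified Lean document; each statement's English description precedes it below -/
import Mathlib

section
/- (Yano's inequality) For every n ≥ 1, the L¹ norm of the n-th Walsh-Fejér kernel satisfies ∫_G |K_n^w| dμ ≤ 2. -/
open MeasureTheory Filter Finset
open scoped ENNReal NNReal

/-- The Walsh group `G = ∏ ℤ₂`. -/
abbrev WG := ℕ → ZMod 2

noncomputable section

/-- The `k`-th Rademacher function `r_k(x) = (-1)^{x_k}`. -/
def rad (k : ℕ) (x : WG) : ℝ := (-1 : ℝ) ^ (x k).val

/-- The Walsh-Paley function `w_n(x) = (-1)^{∑ n_k x_k}`. -/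
def walsh (n : ℕ) (x : WG) : ℝ :=
  (-1 : ℝ) ^ (∑ k ∈ Finset.range (n + 1), if n.testBit k then (x k).val else 0)

/-- The Walsh-Kaczmarz function
`κ_n(x) = r_{|n|}(x)·(-1)^{∑_{k<|n|} n_k x_{|n|-1-k}}`, `κ_0 = 1`,
where `|n| = Nat.log 2 n` is the position of the leading binary digit. -/
def kacz (n : ℕ) (x : WG) : ℝ :=
  if n = 0 then 1 else
    rad (Nat.log 2 n) x *
      (-1 : ℝ) ^ (∑ k ∈ Finset.range (Nat.log 2 n),
        if n.testBit k then (x (Nat.log 2 n - 1 - k)).val else 0)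

/-- Walsh-Paley Dirichlet kernel. -/
def Dw (n : ℕ) (x : WG) : ℝ := ∑ k ∈ Finset.range n, walsh k x

/-- Walsh-Kaczmarz Dirichlet kernel. -/
def Dk (n : ℕ) (x : WG) : ℝ := ∑ k ∈ Finset.range n, kacz k x

/-- Walsh-Fejér kernel `K_n = (1/n) ∑_{k=1}^n D_k`. -/
def Kw (n : ℕ) (x : WG) : ℝ := (1 / n : ℝ) * ∑ k ∈ Finset.Icc 1 n, Dw k x

/-- The transformation reversing the first `A` coordinates. -/
def tau (A : ℕ) (x : WG) : WG := fun k => if k < A then x (A - 1 - k) else x k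

/-- The dyadic interval (cylinder) `I_n(x)`. -/
def cyl (n : ℕ) (x : WG) : Set WG := {y | ∀ k < n, y k = x k}

/-- `I_n = I_n(0)`. -/
def In (n : ℕ) : Set WG := cyl n 0

/-- A measure `μ` on `WG` is the Haar (product) measure iff every cylinder of
level `n` has measure `2⁻ⁿ`. -/
def IsHaar (μ : Measure WG) : Prop :=
  ∀ (n : ℕ) (x : WG), μ (cyl n x) = (2 : ℝ≥0∞)⁻¹ ^ n

/-- Walsh-Fourier coefficient. -/
def fhatW (μ : Measure WG) (f : WG → ℝ) (j : ℕ) : ℝ := ∫ x, f x * walsh j x ∂μ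

/-- Walsh-Fourier partial sum `S_N f`. -/
def partialW (μ : Measure WG) (N : ℕ) (f : WG → ℝ) (x : WG) : ℝ :=
  ∑ j ∈ Finset.range N, fhatW μ f j * walsh j x

/-- Walsh-Kaczmarz-Fourier coefficient. -/
def fhatK (μ : Measure WG) (f : WG → ℝ) (j : ℕ) : ℝ := ∫ x, f x * kacz j x ∂μ

/-- Walsh-Kaczmarz-Fourier partial sum `S_N^κ f`. -/
def partialK (μ : Measure WG) (N : ℕ) (f : WG → ℝ) (x : WG) : ℝ :=
  ∑ j ∈ Finset.range N, fhatK μ f j * kacz j x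

/-- Walsh-Kaczmarz-Fejér mean `σ_n^κ f`. -/
def sigmaK (μ : Measure WG) (n : ℕ) (f : WG → ℝ) (x : WG) : ℝ :=
  (1 / n : ℝ) * ∑ j ∈ Finset.Icc 1 n, partialK μ j f x

noncomputable section
namespace YanoAux1

lemma testBit_log {j : ℕ} (hj : 1 ≤ j) : j.testBit (Nat.log 2 j) = true := by
  have h1 : 2 ^ Nat.log 2 j ≤ j := Nat.pow_log_le_self 2 (by omega)
  have h2 : j < 2 ^ (Nat.log 2 j + 1) := Nat.lt_pow_succ_log_self (by norm_num) j
  have hdiv : j / 2 ^ Nat.log 2 j = 1 := by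
    apply Nat.div_eq_of_lt_le (by simpa using h1)
    rw [pow_succ] at h2; omega
  rw [Nat.testBit_eq_decide_div_mod_eq, hdiv]
  decide

lemma walsh_eq_of_lt (n : ℕ) {N : ℕ} (h : n < N) (x : WG) :
    walsh n x
      = (-1 : ℝ) ^ (∑ k ∈ Finset.range N, if n.testBit k then (x k).val else 0) := by
  unfold walsh
  congr 1
  apply Finset.sum_subset (Finset.range_subset_range.mpr h)
  intro k _ hk
  have hk1 : n + 1 ≤ k := by simpa using Finset.mem_range.not.mp hk
  have hk' : n < 2 ^ k :=
    lt_of_lt_of_le (Nat.lt_two_pow_self (n := n)) (Nat.pow_le_pow_right (by norm_num) (by omega))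
  simp [Nat.testBit_eq_false_of_lt hk']

lemma testBit_two_pow_add {m k : ℕ} (hk : k < 2 ^ m) (i : ℕ) :
    (2 ^ m + k).testBit i = if i = m then true else k.testBit i := by
  rcases lt_trichotomy i m with h | h | h
  · rw [Nat.testBit_two_pow_add_gt h]
    simp [Nat.ne_of_lt h]
  · subst h
    rw [Nat.testBit_two_pow_add_eq]
    simp [Nat.testBit_eq_false_of_lt hk]
  · have h1 : 2 ^ m + k < 2 ^ i := by
      have : 2 ^ m + k < 2 ^ (m + 1) := by rw [pow_succ]; omega
      exact lt_of_lt_of_le this (Nat.pow_le_pow_right (by norm_num) h)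
    have h2 : k.testBit i = false :=
      Nat.testBit_eq_false_of_lt (by omega)
    rw [Nat.testBit_eq_false_of_lt h1, h2]
    simp [Nat.ne_of_gt h]

lemma walsh_two_pow_add {m k : ℕ} (hk : k < 2 ^ m) (x : WG) :
    walsh (2 ^ m + k) x = rad m x * walsh k x := by
  have hmN : m < 2 ^ m + k + 1 := by have := Nat.lt_two_pow_self (n := m); omega
  rw [walsh_eq_of_lt (2 ^ m + k) (lt_add_one _) x,
      walsh_eq_of_lt k (show k < 2 ^ m + k + 1 by omega) x]
  have hterm : ∀ i : ℕ,
      (if (2 ^ m + k).testBit i then (x i).val else 0)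
        = (if i = m then (x i).val else 0) + (if k.testBit i then (x i).val else 0) := by
    intro i
    rw [testBit_two_pow_add hk]
    by_cases h : i = m
    · subst h
      simp [Nat.testBit_eq_false_of_lt hk]
    · simp [h]
  simp_rw [hterm]
  rw [Finset.sum_add_distrib, Finset.sum_ite_eq' (Finset.range (2 ^ m + k + 1)) m
    (fun i => (x i).val), if_pos (Finset.mem_range.mpr hmN), pow_add]
  rfl

lemma Dw_two_pow_add {m k : ℕ} (hk : k ≤ 2 ^ m) (x : WG) :
    Dw (2 ^ m + k) x = Dw (2 ^ m) x + rad m x * Dw k x := by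
  unfold Dw
  rw [Finset.sum_range_add, Finset.mul_sum]
  congr 1
  exact Finset.sum_congr rfl fun i hi =>
    walsh_two_pow_add (lt_of_lt_of_le (Finset.mem_range.mp hi) hk) x

lemma zmod2_val_cases (a : ZMod 2) : a.val = 0 ∨ a.val = 1 := by revert a; decide

lemma rad_cases (m : ℕ) (x : WG) : rad m x = 1 ∨ rad m x = -1 := by
  unfold rad
  rcases zmod2_val_cases (x m) with h | h <;> rw [h] <;> simp

lemma Dw_two_pow (m : ℕ) (x : WG) :
    Dw (2 ^ m) x = if (∀ j < m, x j = 0) then ((2 : ℝ) ^ m) else 0 := by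
  induction m with
  | zero =>
    simp only [pow_zero, Dw, Finset.sum_range_one, walsh]
    have : ∀ k ∈ Finset.range 1, (if Nat.testBit 0 k then (x k).val else 0) = 0 := by
      simp [Nat.testBit]
    rw [Finset.sum_congr rfl this]
    simp
  | succ m ih =>
    have h2 : (2 : ℕ) ^ (m + 1) = 2 ^ m + 2 ^ m := by ring
    rw [h2, Dw_two_pow_add le_rfl, ih]
    by_cases h1 : ∀ j < m, x j = 0
    · by_cases hm : x m = 0
      · have hall : ∀ j < m + 1, x j = 0 := by
          intro j hj
          rcases Nat.lt_succ_iff_lt_or_eq.mp hj with h | h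
          · exact h1 j h
          · subst h; exact hm
        have hv : (x m).val = 0 := by rw [hm]; rfl
        rw [if_pos h1, if_pos hall]
        simp only [rad, hv, pow_zero, one_mul]
        ring
      · have hnot : ¬ ∀ j < m + 1, x j = 0 := fun h => hm (h m (Nat.lt_succ_self m))
        have hv : (x m).val = 1 := by
          rcases zmod2_val_cases (x m) with h | h
          · exact absurd ((ZMod.val_eq_zero _).mp h) hm
          · exact h
        rw [if_pos h1, if_neg hnot]
        simp only [rad, hv, pow_one]
        ring
    · have hnot : ¬ ∀ j < m + 1, x j = 0 := fun h => h1 fun j hj => h j (by omega)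
      rw [if_neg h1, if_neg hnot]
      ring

lemma Dw_two_pow_nonneg (m : ℕ) (x : WG) : 0 ≤ Dw (2 ^ m) x := by
  rw [Dw_two_pow]; split <;> positivity


lemma cyl_zero (x : WG) : cyl 0 x = Set.univ := by
  ext y; simp [cyl]

lemma isFinite (μ : Measure WG) (hμ : IsHaar μ) : IsFiniteMeasure μ := by
  constructor
  rw [← cyl_zero 0, hμ 0 0]
  simp

lemma measure_univ_eq (μ : Measure WG) (hμ : IsHaar μ) : μ Set.univ = 1 := by
  rw [← cyl_zero 0, hμ 0 0]; simp

def cylV (N : ℕ) (v : Fin N → ZMod 2) : Set WG := {x | ∀ k : Fin N, x k = v k}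

lemma measurableSet_cylV (N : ℕ) (v : Fin N → ZMod 2) : MeasurableSet (cylV N v) := by
  have h : cylV N v = ⋂ k : Fin N, (fun x : WG => x (k : ℕ)) ⁻¹' {v k} := by
    ext x; simp [cylV]
  rw [h]
  exact MeasurableSet.iInter fun k =>
    (measurable_pi_apply (k : ℕ)) (measurableSet_singleton (v k))

lemma measure_cylV (μ : Measure WG) (hμ : IsHaar μ) (N : ℕ) (v : Fin N → ZMod 2) :
    μ (cylV N v) = (2 : ℝ≥0∞)⁻¹ ^ N := by
  have h : cylV N v = cyl N (fun k => if h : k < N then v ⟨k, h⟩ else 0) := by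
    ext x
    constructor
    · intro hx k hk
      simpa [hk] using hx ⟨k, hk⟩
    · intro hx k
      simpa [k.isLt] using hx k k.isLt
  rw [h, hμ]

lemma integral_dep (μ : Measure WG) (hμ : IsHaar μ) (N : ℕ)
    (g : (Fin N → ZMod 2) → ℝ) :
    Integrable (fun x : WG => g (fun k => x k)) μ ∧
      ∫ x : WG, g (fun k => x k) ∂μ = (1 / 2) ^ N * ∑ v : Fin N → ZMod 2, g v := by
  haveI := isFinite μ hμ
  have hrep : ∀ x : WG, g (fun k => x k) =
      ∑ v : Fin N → ZMod 2, Set.indicator (cylV N v) (fun _ => g v) x := by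
    intro x
    rw [Finset.sum_eq_single (fun k : Fin N => x k)]
    · rw [Set.indicator_of_mem]
      intro k; rfl
    · intro v _ hv
      rw [Set.indicator_of_notMem]
      intro hx
      exact hv (funext fun k => (hx k).symm)
    · simp
  have hint : ∀ v : Fin N → ZMod 2,
      Integrable (Set.indicator (cylV N v) (fun _ => g v)) μ :=
    fun v => (integrable_const (g v)).indicator (measurableSet_cylV N v)
  have hintS : Integrable
      (fun x : WG => ∑ v : Fin N → ZMod 2, Set.indicator (cylV N v) (fun _ => g v) x) μ :=
    integrable_finset_sum _ fun v _ => hint v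
  have htr : ((2 : ℝ≥0∞)⁻¹ ^ N).toReal = (1 / 2 : ℝ) ^ N := by
    rw [ENNReal.toReal_pow, ENNReal.toReal_inv]
    norm_num
  constructor
  · exact hintS.congr (Filter.Eventually.of_forall fun x => (hrep x).symm)
  · calc ∫ x : WG, g (fun k => x k) ∂μ
        = ∫ x : WG, (∑ v : Fin N → ZMod 2,
            Set.indicator (cylV N v) (fun _ => g v) x) ∂μ :=
          integral_congr_ae (Filter.Eventually.of_forall hrep)
      _ = ∑ v : Fin N → ZMod 2, ∫ x : WG,
            Set.indicator (cylV N v) (fun _ => g v) x ∂μ :=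
          integral_finset_sum _ fun v _ => hint v
      _ = ∑ v : Fin N → ZMod 2, (1 / 2 : ℝ) ^ N * g v := by
          refine Finset.sum_congr rfl fun v _ => ?_
          rw [integral_indicator_const (g v) (measurableSet_cylV N v),
            measureReal_def, measure_cylV μ hμ, htr, smul_eq_mul]
      _ = (1 / 2) ^ N * ∑ v : Fin N → ZMod 2, g v := by rw [← Finset.mul_sum]

def gW (j : ℕ) : (Fin (j + 1) → ZMod 2) → ℝ := fun v =>
  (-1 : ℝ) ^ (∑ k : Fin (j + 1), if j.testBit k then (v k).val else 0)

lemma walsh_dep (j : ℕ) (x : WG) : walsh j x = gW j (fun k => x k) := by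
  unfold walsh gW
  rw [Fin.sum_univ_eq_sum_range (fun k => if j.testBit k then (x k).val else 0) (j + 1)]

lemma integrable_walsh (μ : Measure WG) (hμ : IsHaar μ) (j : ℕ) :
    Integrable (walsh j) μ :=
  ((integral_dep μ hμ (j + 1) (gW j)).1).congr
    (Filter.Eventually.of_forall fun x => (walsh_dep j x).symm)

lemma sum_zmod2 : ∑ b : ZMod 2, ((-1 : ℝ)) ^ b.val = 0 := by
  have h : (Finset.univ : Finset (ZMod 2)) = {0, 1} := by decide
  rw [h, Finset.sum_pair (by decide)]
  norm_num [ZMod.val_zero, ZMod.val_one]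

lemma integral_walsh_zero (μ : Measure WG) (hμ : IsHaar μ) :
    ∫ x : WG, walsh 0 x ∂μ = 1 := by
  have h : ∀ x : WG, walsh 0 x = 1 := by
    intro x
    unfold walsh
    have : ∀ k ∈ Finset.range 1, (if Nat.testBit 0 k then (x k).val else 0) = 0 := by
      simp [Nat.testBit]
    rw [Finset.sum_congr rfl this]
    simp
  rw [integral_congr_ae (Filter.Eventually.of_forall h), integral_const,
    measureReal_def, measure_univ_eq μ hμ]
  simp

lemma integral_walsh (μ : Measure WG) (hμ : IsHaar μ) {j : ℕ} (hj : 1 ≤ j) :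
    ∫ x : WG, walsh j x ∂μ = 0 := by
  have h := (integral_dep μ hμ (j + 1) (gW j)).2
  rw [integral_congr_ae (Filter.Eventually.of_forall fun x => walsh_dep j x), h]
  have hsum : ∑ v : Fin (j + 1) → ZMod 2, gW j v = 0 := by
    unfold gW
    have h1 : ∀ v : Fin (j + 1) → ZMod 2,
        (-1 : ℝ) ^ (∑ k : Fin (j + 1), if j.testBit k then (v k).val else 0)
          = ∏ k : Fin (j + 1), (-1 : ℝ) ^ (if j.testBit k then (v k).val else 0) := by
      intro v
      rw [Finset.prod_pow_eq_pow_sum]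
    simp_rw [h1]
    rw [← Fintype.piFinset_univ, ← Finset.prod_univ_sum
      (fun _ : Fin (j + 1) => (Finset.univ : Finset (ZMod 2)))
      (fun k b => (-1 : ℝ) ^ (if j.testBit k then b.val else 0))]
    have hmem : Nat.log 2 j < j + 1 :=
      Nat.lt_succ_of_le (Nat.log_le_self 2 j)
    apply Finset.prod_eq_zero (Finset.mem_univ (⟨Nat.log 2 j, hmem⟩ : Fin (j + 1)))
    rw [show (j.testBit ((⟨Nat.log 2 j, hmem⟩ : Fin (j+1)) : ℕ)) = true from testBit_log hj]
    simpa using sum_zmod2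
  rw [hsum, mul_zero]

def Tn (n : ℕ) (x : WG) : ℝ := ∑ i ∈ Finset.range n, Dw (1 + i) x

lemma Tn_eq_Icc (n : ℕ) (x : WG) : ∑ k ∈ Finset.Icc 1 n, Dw k x = Tn n x := by
  induction n with
  | zero => simp [Tn]
  | succ n ih =>
    rw [Finset.sum_Icc_succ_top (by omega), ih]
    unfold Tn
    rw [Finset.sum_range_succ, Nat.add_comm 1 n]

lemma integrable_Dw (μ : Measure WG) (hμ : IsHaar μ) (n : ℕ) :
    Integrable (Dw n) μ := by
  have h : Dw n = fun x => ∑ k ∈ Finset.range n, walsh k x := rfl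
  rw [h]
  exact integrable_finset_sum _ fun k _ => integrable_walsh μ hμ k

lemma integral_Dw (μ : Measure WG) (hμ : IsHaar μ) {n : ℕ} (hn : 1 ≤ n) :
    ∫ x : WG, Dw n x ∂μ = 1 := by
  have h : ∀ x : WG, Dw n x = ∑ k ∈ Finset.range n, walsh k x := fun x => rfl
  rw [integral_congr_ae (Filter.Eventually.of_forall h),
    integral_finset_sum _ fun k _ => integrable_walsh μ hμ k]
  rw [Finset.sum_eq_single 0]
  · exact integral_walsh_zero μ hμ
  · intro k _ hk
    exact integral_walsh μ hμ (by omega)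
  · intro h0
    exact absurd (Finset.mem_range.mpr (by omega)) h0

lemma integrable_Tn (μ : Measure WG) (hμ : IsHaar μ) (n : ℕ) :
    Integrable (Tn n) μ := by
  have h : Tn n = fun x => ∑ i ∈ Finset.range n, Dw (1 + i) x := rfl
  rw [h]
  exact integrable_finset_sum _ fun i _ => integrable_Dw μ hμ (1 + i)

lemma integral_Tn (μ : Measure WG) (hμ : IsHaar μ) (n : ℕ) :
    ∫ x : WG, Tn n x ∂μ = n := by
  have h : ∀ x : WG, Tn n x = ∑ i ∈ Finset.range n, Dw (1 + i) x := fun x => rfl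
  rw [integral_congr_ae (Filter.Eventually.of_forall h),
    integral_finset_sum _ fun i _ => integrable_Dw μ hμ (1 + i)]
  rw [Finset.sum_congr rfl fun i _ => integral_Dw μ hμ (by omega : 1 ≤ 1 + i)]
  simp

lemma Tn_add {m q : ℕ} (hq : q ≤ 2 ^ m) (x : WG) :
    Tn (2 ^ m + q) x = Tn (2 ^ m) x + q * Dw (2 ^ m) x + rad m x * Tn q x := by
  unfold Tn
  rw [Finset.sum_range_add]
  have h : ∀ i ∈ Finset.range q,
      Dw (1 + (2 ^ m + i)) x = Dw (2 ^ m) x + rad m x * Dw (1 + i) x := by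
    intro i hi
    rw [show 1 + (2 ^ m + i) = 2 ^ m + (1 + i) by omega]
    exact Dw_two_pow_add (by have := Finset.mem_range.mp hi; omega) x
  rw [Finset.sum_congr rfl h, Finset.sum_add_distrib, Finset.sum_const,
    Finset.card_range, ← Finset.mul_sum]
  ring

lemma Tn_two_pow_nonneg (m : ℕ) (x : WG) : 0 ≤ Tn (2 ^ m) x := by
  induction m with
  | zero =>
    have h : (2 : ℕ) ^ 0 = 1 := rfl
    rw [h]
    unfold Tn
    rw [Finset.sum_range_one]
    have h1 : Dw (1 + 0) x = if (∀ j < 0, x j = 0) then ((2:ℝ) ^ 0) else 0 := by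
      simpa using Dw_two_pow 0 x
    rw [h1]
    split <;> norm_num
  | succ m ih =>
    have h2 : (2 : ℕ) ^ (m + 1) = 2 ^ m + 2 ^ m := by ring
    rw [h2, Tn_add le_rfl]
    have hD := Dw_two_pow_nonneg m x
    rcases rad_cases m x with h | h <;> rw [h] <;> nlinarith [ih, hD,
      (by positivity : (0:ℝ) ≤ ((2:ℕ)^m : ℝ))]

lemma abs_rad (m : ℕ) (x : WG) : |rad m x| = 1 := by
  rcases rad_cases m x with h | h <;> rw [h] <;> norm_num

lemma key (μ : Measure WG) (hμ : IsHaar μ) :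
    ∀ n : ℕ, 1 ≤ n → ∫ x : WG, |Tn n x| ∂μ ≤ 2 * n := by
  intro n
  induction n using Nat.strong_induction_on with
  | _ n IH =>
    intro hn
    set m := Nat.log 2 n with hm
    have h2m : 2 ^ m ≤ n := Nat.pow_log_le_self 2 (by omega)
    have hlt : n < 2 ^ (m + 1) := Nat.lt_pow_succ_log_self (by norm_num) n
    have hpow : (2:ℕ) ^ (m + 1) = 2 ^ m + 2 ^ m := by ring
    set q := n - 2 ^ m with hqdef
    have hq : q < 2 ^ m := by omega
    have hn' : n = 2 ^ m + q := by omega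
    by_cases hq0 : q = 0
    · -- n = 2 ^ m
      have hnn : n = 2 ^ m := by omega
      have habs : ∀ x : WG, |Tn n x| = Tn n x := by
        intro x
        rw [hnn]
        exact abs_of_nonneg (Tn_two_pow_nonneg m x)
      rw [integral_congr_ae (Filter.Eventually.of_forall habs), integral_Tn μ hμ]
      have : (1:ℝ) ≤ (n:ℝ) := by exact_mod_cast hn
      linarith
    · have hq1 : 1 ≤ q := by omega
      have hql : q < n := by omega
      have hIH := IH q hql hq1
      have hbd : ∀ x : WG,
          |Tn n x| ≤ Tn (2 ^ m) x + (q:ℝ) * Dw (2 ^ m) x + |Tn q x| := by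
        intro x
        rw [hn', Tn_add (le_of_lt hq)]
        calc |Tn (2 ^ m) x + ↑q * Dw (2 ^ m) x + rad m x * Tn q x|
            ≤ |Tn (2 ^ m) x + ↑q * Dw (2 ^ m) x| + |rad m x * Tn q x| := abs_add_le _ _
          _ ≤ Tn (2 ^ m) x + ↑q * Dw (2 ^ m) x + |Tn q x| := by
              rw [abs_mul, abs_rad, one_mul]
              have h1 : 0 ≤ Tn (2 ^ m) x + ↑q * Dw (2 ^ m) x := by
                have := Tn_two_pow_nonneg m x
                have := Dw_two_pow_nonneg m x
                positivity
              rw [abs_of_nonneg h1]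
      have hintR : Integrable
          (fun x : WG => Tn (2 ^ m) x + (q:ℝ) * Dw (2 ^ m) x + |Tn q x|) μ :=
        (((integrable_Tn μ hμ (2 ^ m)).add
          ((integrable_Dw μ hμ (2 ^ m)).const_mul (q:ℝ))).add
          (integrable_Tn μ hμ q).abs)
      have hmono : ∫ x : WG, |Tn n x| ∂μ ≤
          ∫ x : WG, (Tn (2 ^ m) x + (q:ℝ) * Dw (2 ^ m) x + |Tn q x|) ∂μ :=
        integral_mono (integrable_Tn μ hμ n).abs hintR hbd
      have hA : Integrable (fun x : WG => Tn (2 ^ m) x) μ := integrable_Tn μ hμ (2 ^ m)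
      have hB : Integrable (fun x : WG => (q:ℝ) * Dw (2 ^ m) x) μ :=
        (integrable_Dw μ hμ (2 ^ m)).const_mul (q:ℝ)
      have hAB : Integrable (fun x : WG => Tn (2 ^ m) x + (q:ℝ) * Dw (2 ^ m) x) μ :=
        hA.add hB
      have hC : Integrable (fun x : WG => |Tn q x|) μ := (integrable_Tn μ hμ q).abs
      have hsplit : ∫ x : WG, (Tn (2 ^ m) x + (q:ℝ) * Dw (2 ^ m) x + |Tn q x|) ∂μ
          = (2 ^ m : ℝ) + (q:ℝ) + ∫ x : WG, |Tn q x| ∂μ := by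
        rw [integral_add hAB hC, integral_add hA hB, integral_Tn μ hμ,
          integral_const_mul, integral_Dw μ hμ (Nat.one_le_two_pow)]
        push_cast
        ring
      have hfin : (2 ^ m : ℝ) + (q:ℝ) + 2 * q ≤ 2 * n := by
        have hqr : (q:ℝ) ≤ (2:ℝ) ^ m := by exact_mod_cast le_of_lt hq
        have hnr : (n:ℝ) = (2:ℝ) ^ m + q := by
          rw [hn']; push_cast; ring
        linarith
      calc ∫ x : WG, |Tn n x| ∂μ
          ≤ (2 ^ m : ℝ) + (q:ℝ) + ∫ x : WG, |Tn q x| ∂μ := by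
            rw [← hsplit]; exact hmono
        _ ≤ (2 ^ m : ℝ) + (q:ℝ) + 2 * q := by linarith
        _ ≤ 2 * n := hfin

end YanoAux1
end

end

noncomputable section

/-- Yano's inequality: `∫_G |K_n^w| dμ ≤ 2` for `n ≥ 1`. -/
theorem yano (μ : Measure WG) (hμ : IsHaar μ) (n : ℕ) (hn : 1 ≤ n) :
    ∫ x, |Kw n x| ∂μ ≤ 2 := by
  have hKw : ∀ x : WG, |Kw n x| = (1 / n : ℝ) * |YanoAux1.Tn n x| := by
    intro x
    unfold Kw
    rw [YanoAux1.Tn_eq_Icc, abs_mul, abs_of_nonneg (by positivity : (0:ℝ) ≤ 1 / (n:ℝ))]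
  rw [integral_congr_ae (Filter.Eventually.of_forall hKw), integral_const_mul]
  have hkey := YanoAux1.key μ hμ n hn
  have hnpos : (0:ℝ) < (n:ℝ) := by exact_mod_cast hn
  calc (1 / n : ℝ) * ∫ x : WG, |YanoAux1.Tn n x| ∂μ
      ≤ (1 / n : ℝ) * (2 * n) := by
        apply mul_le_mul_of_nonneg_left hkey (by positivity)
    _ = 2 := by field_simp

end
end

section
/- Let A > 2 and q_{A-1} = 2^{2(A-1)} + 2^{2(A-2)} + ⋯ + 2^2 + 2^0 = ∑_{j=0}^{A-1} 4^j. Then for all m with 0 ≤ m ≤ A−3, all s with m+2 ≤ s ≤ A−1, and all x in the dyadic interval I_{2A}(0,…,0, x_{2m}=1, 0,…,0, x_{2s}=1, x_{2s+1}, …, x_{2A-1}) (i.e. x_j = 0 for j < 2s except x_{2m} = 1, and x_{2s} = 1), one has q_{A-1}·|K_{q_{A-1}}^w(x)| ≥ 2^{2m+2s−3}. -/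
open MeasureTheory Filter Finset
open scoped ENNReal NNReal

noncomputable section

/-- `q_A = ∑_{j=0}^{A} 4^j`. -/
def qq (A : ℕ) : ℕ := ∑ j ∈ Finset.range (A + 1), 4 ^ j


-- ==================== auxiliary lemmas ====================

namespace FejerAux

lemma rad_abs (k : ℕ) (x : WG) : |rad k x| = 1 := by
  rw [rad, abs_pow, abs_neg, abs_one, one_pow]

lemma rad_of_zero {k : ℕ} {x : WG} (h : x k = 0) : rad k x = 1 := by
  rw [rad, h, show ((0 : ZMod 2)).val = 0 from rfl, pow_zero]

lemma rad_of_one {k : ℕ} {x : WG} (h : x k = 1) : rad k x = -1 := by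
  rw [rad, h, show ((1 : ZMod 2)).val = 1 from rfl, pow_one]

lemma walsh_eq_of_lt {n M : ℕ} (hM : n < 2 ^ M) (x : WG) :
    walsh n x = (-1 : ℝ) ^ (∑ k ∈ Finset.range M, if n.testBit k then (x k).val else 0) := by
  have key : ∀ M₁ M₂ : ℕ, M₁ ≤ M₂ → n < 2 ^ M₁ →
      (∑ k ∈ Finset.range M₂, if n.testBit k then (x k).val else 0)
        = ∑ k ∈ Finset.range M₁, if n.testBit k then (x k).val else 0 := by
    intro M₁ M₂ h hn
    refine (Finset.sum_subset (Finset.range_subset_range.2 h) ?_).symm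
    intro k _ hk
    rw [Finset.mem_range, not_lt] at hk
    have : n.testBit k = false :=
      Nat.testBit_lt_two_pow (lt_of_lt_of_le hn (Nat.pow_le_pow_right (by norm_num) hk))
    simp [this]
  unfold walsh
  congr 1
  rcases le_total (n + 1) M with h | h
  · exact (key (n + 1) M h ((Nat.lt_two_pow_self (n := n)).trans_le (Nat.pow_le_pow_right (by norm_num) (Nat.le_succ n)))).symm
  · exact key M (n + 1) h hM

lemma walsh_two_pow_add {i k : ℕ} (hk : k < 2 ^ i) (x : WG) :
    walsh (2 ^ i + k) x = rad i x * walsh k x := by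
  have h1 : 2 ^ i + k < 2 ^ (i + 1) := by
    have : (2:ℕ) ^ (i+1) = 2 ^ i + 2 ^ i := by ring
    omega
  rw [walsh_eq_of_lt h1 x, walsh_eq_of_lt hk x, Finset.sum_range_succ]
  have hbit_i : (2 ^ i + k).testBit i = true := by
    rw [Nat.testBit_two_pow_add_eq, Nat.testBit_lt_two_pow hk]; rfl
  have hsum : (∑ j ∈ Finset.range i, if (2 ^ i + k).testBit j then (x j).val else 0)
      = ∑ j ∈ Finset.range i, if k.testBit j then (x j).val else 0 := by
    refine Finset.sum_congr rfl fun j hj => ?_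
    rw [Finset.mem_range] at hj
    rw [Nat.testBit_two_pow_add_gt hj]
  rw [hsum, hbit_i, if_pos rfl, pow_add, rad, mul_comm]

lemma walsh_zero_eq (x : WG) : walsh 0 x = 1 := by
  simp [walsh]

lemma Dw_one (x : WG) : Dw 1 x = 1 := by
  simp [Dw, walsh_zero_eq]

lemma Dw_two_pow_add {i l : ℕ} (hl : l ≤ 2 ^ i) (x : WG) :
    Dw (2 ^ i + l) x = Dw (2 ^ i) x + rad i x * Dw l x := by
  unfold Dw
  rw [Finset.sum_range_add, Finset.mul_sum]
  congr 1
  refine Finset.sum_congr rfl fun j hj => ?_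
  rw [Finset.mem_range] at hj
  exact walsh_two_pow_add (lt_of_lt_of_le hj hl) x

lemma Dw_two_pow (i : ℕ) (x : WG) :
    Dw (2 ^ i) x = ∏ k ∈ Finset.range i, (1 + rad k x) := by
  induction i with
  | zero => simpa using Dw_one x
  | succ n ih =>
    have h2 : (2:ℕ) ^ (n+1) = 2 ^ n + 2 ^ n := by ring
    rw [h2, Dw_two_pow_add le_rfl, ih, Finset.prod_range_succ]
    ring

/-- `SK n x = n · K_n(x)` -/
noncomputable def SK (n : ℕ) (x : WG) : ℝ := ∑ k ∈ Finset.Icc 1 n, Dw k x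

lemma SK_one (x : WG) : SK 1 x = 1 := by
  simp [SK, Dw_one]

lemma SK_add {i l : ℕ} (hl : l ≤ 2 ^ i) (x : WG) :
    SK (2 ^ i + l) x = SK (2 ^ i) x + l * Dw (2 ^ i) x + rad i x * SK l x := by
  have h01 : ∀ n : ℕ, Finset.Icc 1 n = Finset.Ioc 0 n := fun n => Finset.Icc_add_one_left_eq_Ioc 0 n
  have hsplit : (∑ k ∈ Finset.Ioc 0 (2 ^ i), Dw k x)
      + ∑ k ∈ Finset.Ioc (2 ^ i) (2 ^ i + l), Dw k x
      = ∑ k ∈ Finset.Ioc 0 (2 ^ i + l), Dw k x :=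
    Finset.sum_Ioc_consecutive _ (Nat.zero_le _) (Nat.le_add_right _ _)
  have hmap : Finset.Ioc (2 ^ i) (2 ^ i + l) = (Finset.Ioc 0 l).map
      ⟨fun j => 2 ^ i + j, add_right_injective _⟩ := by
    ext a
    simp only [Finset.mem_Ioc, Finset.mem_map, Function.Embedding.coeFn_mk]
    constructor
    · intro h; exact ⟨a - 2 ^ i, by omega, by omega⟩
    · rintro ⟨b, hb, rfl⟩; omega
  have h2 : ∑ k ∈ Finset.Ioc (2 ^ i) (2 ^ i + l), Dw k x
      = l * Dw (2 ^ i) x + rad i x * ∑ k ∈ Finset.Ioc 0 l, Dw k x := by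
    rw [hmap, Finset.sum_map]
    simp only [Function.Embedding.coeFn_mk]
    have hterm : ∀ j ∈ Finset.Ioc 0 l, Dw (2 ^ i + j) x = Dw (2 ^ i) x + rad i x * Dw j x := by
      intro j hj
      rw [Finset.mem_Ioc] at hj
      exact Dw_two_pow_add (le_trans hj.2 hl) x
    rw [Finset.sum_congr rfl hterm, Finset.sum_add_distrib, Finset.sum_const, Nat.card_Ioc,
        Nat.sub_zero, ← Finset.mul_sum, nsmul_eq_mul]
  unfold SK
  rw [h01, h01, h01, ← hsplit, h2]
  ring

lemma SK_two_pow_succ (i : ℕ) (x : WG) :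
    SK (2 ^ (i + 1)) x = (1 + rad i x) * SK (2 ^ i) x + 2 ^ i * Dw (2 ^ i) x := by
  have h2 : (2:ℕ) ^ (i+1) = 2 ^ i + 2 ^ i := by ring
  rw [h2, SK_add le_rfl]
  push_cast
  ring

lemma qq_succ (t : ℕ) : qq (t + 1) = 2 ^ (2 * (t + 1)) + qq t := by
  rw [qq, qq, Finset.sum_range_succ, add_comm]
  congr 1
  rw [pow_mul]; norm_num

lemma qq_linear (t : ℕ) : 3 * qq t + 1 = 2 ^ (2 * (t + 1)) := by
  induction t with
  | zero => rfl
  | succ n ih =>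
    rw [qq_succ]
    have : (2:ℕ) ^ (2 * (n + 1 + 1)) = 4 * 2 ^ (2 * (n + 1)) := by ring
    omega

lemma qq_lt (t : ℕ) : qq t < 2 ^ (2 * (t + 1)) := by
  have := qq_linear t; omega

lemma qq_pos (t : ℕ) : 0 < qq t := by
  have h1 := qq_linear t
  have h2 : (4:ℕ) ≤ 2 ^ (2 * (t + 1)) := by
    calc (4:ℕ) = 2 ^ 2 := rfl
    _ ≤ 2 ^ (2 * (t + 1)) := Nat.pow_le_pow_right (by norm_num) (by omega)
  omega

lemma SK_qq_succ (t : ℕ) (x : WG) :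
    SK (qq (t + 1)) x = SK (2 ^ (2 * (t + 1))) x
      + qq t * Dw (2 ^ (2 * (t + 1))) x + rad (2 * (t + 1)) x * SK (qq t) x := by
  rw [qq_succ, SK_add (le_of_lt (qq_lt t))]

section Specialized

variable {m s : ℕ} {x : WG}

lemma D_le (hs1 : m + 2 ≤ s) (hx0 : ∀ j < 2 * s, j ≠ 2 * m → x j = 0)
    {i : ℕ} (hi : i ≤ 2 * m) : Dw (2 ^ i) x = 2 ^ i := by
  rw [Dw_two_pow]
  have h : ∀ k ∈ Finset.range i, (1 + rad k x) = 2 := by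
    intro k hk
    rw [Finset.mem_range] at hk
    rw [rad_of_zero (hx0 k (by omega) (by omega))]
    norm_num
  rw [Finset.prod_congr rfl h, Finset.prod_const, Finset.card_range]

lemma D_gt (hx2m : x (2 * m) = 1) {i : ℕ} (hi : 2 * m < i) : Dw (2 ^ i) x = 0 := by
  rw [Dw_two_pow]
  refine Finset.prod_eq_zero (Finset.mem_range.2 hi) ?_
  rw [rad_of_one hx2m]
  ring

lemma Fa (hs1 : m + 2 ≤ s) (hx0 : ∀ j < 2 * s, j ≠ 2 * m → x j = 0) :
    ∀ i ≤ 2 * m, 2 * SK (2 ^ i) x = 2 ^ (2 * i) + 2 ^ i := by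
  intro i
  induction i with
  | zero => intro _; rw [pow_zero, SK_one]; norm_num
  | succ n ih =>
    intro hn
    rw [SK_two_pow_succ, rad_of_zero (hx0 n (by omega) (by omega)), D_le hs1 hx0 (by omega)]
    have h := ih (by omega)
    have e1 : (2:ℝ) ^ (2 * (n + 1)) = 4 * 2 ^ (2 * n) := by ring
    have e2 : (2:ℝ) ^ (n + 1) = 2 * 2 ^ n := by ring
    have e3 : (2:ℝ) ^ n * 2 ^ n = 2 ^ (2 * n) := by rw [← pow_add]; ring_nf
    nlinarith [h, e1, e2, e3]

lemma Fb (hs1 : m + 2 ≤ s) (hx2m : x (2 * m) = 1)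
    (hx0 : ∀ j < 2 * s, j ≠ 2 * m → x j = 0) :
    SK (2 ^ (2 * m + 1)) x = 2 ^ (2 * m) * 2 ^ (2 * m) := by
  rw [SK_two_pow_succ, rad_of_one hx2m, D_le hs1 hx0 le_rfl]
  ring

lemma Fc (hs1 : m + 2 ≤ s) (hx2m : x (2 * m) = 1)
    (hx0 : ∀ j < 2 * s, j ≠ 2 * m → x j = 0) :
    ∀ i, 2 * m + 1 ≤ i → i ≤ 2 * s → SK (2 ^ i) x = 2 ^ (i - 1) * 2 ^ (2 * m) := by
  intro i hi
  induction i, hi using Nat.le_induction with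
  | base =>
    intro _
    rw [Fb hs1 hx2m hx0]
    norm_num
  | succ n hn ih =>
    intro hns
    rw [SK_two_pow_succ, rad_of_zero (hx0 n (by omega) (by omega)), D_gt hx2m (by omega),
        ih (by omega), mul_zero, add_zero]
    have e1 : n + 1 - 1 = n := by omega
    have e2 : (2:ℝ) ^ n = 2 * 2 ^ (n - 1) := by
      rw [← pow_succ']
      congr 1
      omega
    rw [e1, e2]
    ring

lemma Fd (hs1 : m + 2 ≤ s) (hx2m : x (2 * m) = 1) (hx2s : x (2 * s) = 1) :
    ∀ i, 2 * s + 1 ≤ i → SK (2 ^ i) x = 0 := by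
  intro i hi
  induction i, hi using Nat.le_induction with
  | base =>
    rw [SK_two_pow_succ, rad_of_one hx2s, D_gt hx2m (by omega)]
    ring
  | succ n hn ih =>
    rw [SK_two_pow_succ, ih, D_gt hx2m (by omega)]
    ring

lemma C1 (hs1 : m + 2 ≤ s) (hx0 : ∀ j < 2 * s, j ≠ 2 * m → x j = 0) :
    ∀ t ≤ m, |SK (qq t) x| ≤ 3 / 2 * 2 ^ (4 * t) := by
  intro t
  induction t with
  | zero => intro _; rw [show qq 0 = 1 from rfl, SK_one]; norm_num
  | succ n ih =>
    intro hn
    have hih := ih (by omega)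
    have hD : Dw (2 ^ (2 * (n + 1))) x = 2 ^ (2 * (n + 1)) := D_le hs1 hx0 (by omega)
    have hF : 2 * SK (2 ^ (2 * (n + 1))) x = 2 ^ (2 * (2 * (n + 1))) + 2 ^ (2 * (n + 1)) :=
      Fa hs1 hx0 (2 * (n + 1)) (by omega)
    have hq : 3 * (qq n : ℝ) + 1 = 2 ^ (2 * (n + 1)) := by
      exact_mod_cast qq_linear n
    set a : ℝ := 2 ^ (2 * (n + 1)) with ha
    have haa : (2:ℝ) ^ (2 * (2 * (n + 1))) = a * a := by
      rw [ha, ← pow_add]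
      congr 1
      omega
    have ha16 : a * a = 16 * 2 ^ (4 * n) := by
      rw [ha, ← pow_add]
      have : 2 * (n + 1) + 2 * (n + 1) = 4 * n + 4 := by omega
      rw [this, pow_add]
      norm_num [mul_comm]
    have h16 : (2:ℝ) ^ (4 * (n + 1)) = a * a := by
      rw [ha, ← pow_add]
      congr 1
      omega
    have ha4 : (4:ℝ) ≤ a := by
      rw [ha]
      calc (4:ℝ) = 2 ^ 2 := by norm_num
      _ ≤ 2 ^ (2 * (n + 1)) := by gcongr <;> [norm_num; omega]
    have hq0 : (0:ℝ) ≤ (qq n : ℝ) := Nat.cast_nonneg _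
    have hFpos : 0 ≤ SK (2 ^ (2 * (n + 1))) x := by nlinarith
    have key : |SK (qq (n + 1)) x|
        ≤ SK (2 ^ (2 * (n + 1))) x + (qq n : ℝ) * a + |SK (qq n) x| := by
      rw [SK_qq_succ, hD]
      calc |SK (2 ^ (2 * (n + 1))) x + (qq n : ℝ) * a + rad (2 * (n + 1)) x * SK (qq n) x|
          ≤ |SK (2 ^ (2 * (n + 1))) x + (qq n : ℝ) * a| + |rad (2 * (n + 1)) x * SK (qq n) x| :=
            abs_add_le _ _
        _ = SK (2 ^ (2 * (n + 1))) x + (qq n : ℝ) * a + |SK (qq n) x| := by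
            rw [abs_mul, rad_abs, one_mul, abs_of_nonneg (by positivity)]
    have hbound : SK (2 ^ (2 * (n + 1))) x + (qq n : ℝ) * a + |SK (qq n) x|
        ≤ 3 / 2 * 2 ^ (4 * (n + 1)) := by
      rw [h16]
      nlinarith [hF, hq, hih, ha16, ha4, abs_nonneg (SK (qq n) x)]
    exact le_trans key hbound

lemma C2 (hs1 : m + 2 ≤ s) (hx2m : x (2 * m) = 1)
    (hx0 : ∀ j < 2 * s, j ≠ 2 * m → x j = 0) :
    ∀ t, m ≤ t → t < s →
      SK (qq t) x ≤ 3 / 2 * 2 ^ (4 * m) + 2 / 3 * 2 ^ (2 * t) * 2 ^ (2 * m) := by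
  intro t ht
  induction t, ht using Nat.le_induction with
  | base =>
    intro _
    have h1 := le_trans (le_abs_self _) (C1 hs1 hx0 m le_rfl)
    have h2 : (0:ℝ) ≤ 2 / 3 * 2 ^ (2 * m) * 2 ^ (2 * m) := by positivity
    linarith
  | succ n hn ih =>
    intro hns
    have hih := ih (by omega)
    rw [SK_qq_succ, rad_of_zero (hx0 (2 * (n + 1)) (by omega) (by omega)),
        D_gt hx2m (by omega), Fc hs1 hx2m hx0 (2 * (n + 1)) (by omega) (by omega),
        mul_zero, add_zero, one_mul]
    have e1 : (2:ℝ) ^ (2 * (n + 1) - 1) = 2 * 2 ^ (2 * n) := by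
      have : (2:ℝ) ^ (2 * (n + 1) - 1) = 2 ^ (2 * n + 1) := by congr 1 <;> omega
      rw [this, pow_succ]
      ring
    have e2 : (2:ℝ) ^ (2 * (n + 1)) = 4 * 2 ^ (2 * n) := by ring
    rw [e1, e2]
    linarith

lemma C3 (hs1 : m + 2 ≤ s) (hx2m : x (2 * m) = 1) (hx2s : x (2 * s) = 1)
    (hx0 : ∀ j < 2 * s, j ≠ 2 * m → x j = 0) :
    (2:ℝ) ^ (2 * m) * 2 ^ (2 * s) ≤ 8 * SK (qq s) x := by
  obtain ⟨u, rfl⟩ : ∃ u, s = u + 1 := ⟨s - 1, by omega⟩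
  have hC2 := C2 hs1 hx2m hx0 u (by omega) (by omega)
  rw [SK_qq_succ, rad_of_one hx2s, D_gt hx2m (by omega),
      Fc hs1 hx2m hx0 (2 * (u + 1)) (by omega) (by omega), mul_zero, add_zero]
  have e1 : (2:ℝ) ^ (2 * (u + 1) - 1) = 2 * 2 ^ (2 * u) := by
    have : (2:ℝ) ^ (2 * (u + 1) - 1) = 2 ^ (2 * u + 1) := by congr 1 <;> omega
    rw [this, pow_succ]
    ring
  have e2 : (2:ℝ) ^ (2 * (u + 1)) = 4 * 2 ^ (2 * u) := by ring
  have e3 : (2:ℝ) ^ (4 * m) = 2 ^ (2 * m) * 2 ^ (2 * m) := by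
    rw [← pow_add]
    congr 1
    omega
  have hu4 : (2:ℝ) ^ (2 * m) * 4 ≤ 2 ^ (2 * u) := by
    have h1 : (2:ℝ) ^ (2 * m) * 4 = 2 ^ (2 * m + 2) := by rw [pow_add]; norm_num
    rw [h1]
    gcongr <;> [norm_num; omega]
  have hp : (0:ℝ) < 2 ^ (2 * m) := by positivity
  nlinarith [hC2]

lemma C4 (hs1 : m + 2 ≤ s) (hx2m : x (2 * m) = 1) (hx2s : x (2 * s) = 1) :
    ∀ t, s ≤ t → |SK (qq t) x| = |SK (qq s) x| := by
  intro t ht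
  induction t, ht using Nat.le_induction with
  | base => rfl
  | succ n hn ih =>
    rw [SK_qq_succ, Fd hs1 hx2m hx2s (2 * (n + 1)) (by omega), D_gt hx2m (by omega),
        mul_zero, add_zero, zero_add, abs_mul, rad_abs, one_mul, ih]

end Specialized

end FejerAux

/-- Goginava's lower bound for the Walsh-Fejér kernel at `q_{A-1}`. -/
theorem fejer_kernel_lower_bound (A : ℕ) (hA : 2 < A) (m s : ℕ)
    (hm : m ≤ A - 3) (hs1 : m + 2 ≤ s) (hs2 : s ≤ A - 1) (x : WG)
    (hx2m : x (2 * m) = 1) (hx2s : x (2 * s) = 1)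
    (hx0 : ∀ j < 2 * s, j ≠ 2 * m → x j = 0) :
    (2 : ℝ) ^ (2 * m + 2 * s - 3) ≤ (qq (A - 1) : ℝ) * |Kw (qq (A - 1)) x| := by
  have h1 : (qq (A - 1) : ℝ) * |Kw (qq (A - 1)) x| = |FejerAux.SK (qq (A - 1)) x| := by
    have hq : (0:ℝ) < qq (A - 1) := by exact_mod_cast FejerAux.qq_pos (A - 1)
    have hKw : Kw (qq (A - 1)) x = (1 / (qq (A - 1) : ℝ)) * FejerAux.SK (qq (A - 1)) x := rfl
    rw [hKw, abs_mul, abs_of_nonneg (by positivity : (0:ℝ) ≤ 1 / (qq (A - 1) : ℝ))]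
    field_simp
  rw [h1, FejerAux.C4 hs1 hx2m hx2s (A - 1) hs2]
  have h3 := FejerAux.C3 hs1 hx2m hx2s hx0
  have h4 : FejerAux.SK (qq s) x ≤ |FejerAux.SK (qq s) x| := le_abs_self _
  have hexp : (2:ℝ) ^ (2 * m + 2 * s - 3) * 8 = 2 ^ (2 * m) * 2 ^ (2 * s) := by
    have e : 2 * m + 2 * s - 3 + 3 = 2 * m + 2 * s := by omega
    calc (2:ℝ) ^ (2 * m + 2 * s - 3) * 8 = 2 ^ (2 * m + 2 * s - 3) * 2 ^ 3 := by norm_num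
    _ = 2 ^ (2 * m + 2 * s - 3 + 3) := by rw [← pow_add]
    _ = 2 ^ (2 * m + 2 * s) := by rw [e]
    _ = 2 ^ (2 * m) * 2 ^ (2 * s) := by rw [pow_add]
  linarith


end
end

section
/- More generally, for any A ∈ ℕ and s < 2^A: D_{s+2^A}^κ(x) = D_{2^A}(x) + r_A(x)·D_s^w(τ_A(x)) for all x ∈ G. -/
open MeasureTheory Filter Finset
open scoped ENNReal NNReal

noncomputable section

lemma my_sum_range_add {M : Type*} [AddCommMonoid M] (f : ℕ → M) (m n : ℕ) :
    ∑ i ∈ Finset.range (m + n), f i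
      = (∑ i ∈ Finset.range m, f i) + ∑ i ∈ Finset.range n, f (m + i) := by
  induction n with
  | zero => simp
  | succ n ih => rw [← Nat.add_assoc, Finset.sum_range_succ, ih, Finset.sum_range_succ, add_assoc]

lemma testBit_two_pow_add' {A j : ℕ} (hj : j < 2 ^ A) (k : ℕ) :
    (2 ^ A + j).testBit k = if k = A then true else j.testBit k := by
  rcases lt_trichotomy k A with h | h | h
  · rw [Nat.testBit_two_pow_add_gt h, if_neg h.ne]
  · subst h
    rw [Nat.testBit_two_pow_add_eq, Nat.testBit_lt_two_pow hj, if_pos rfl]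
    rfl
  · rw [if_neg h.ne', Nat.testBit_lt_two_pow, Nat.testBit_lt_two_pow
      (lt_of_lt_of_le hj (Nat.pow_le_pow_right (by norm_num) h.le))]
    calc 2 ^ A + j < 2 ^ A + 2 ^ A := by omega
    _ = 2 ^ (A + 1) := by ring
    _ ≤ 2 ^ k := Nat.pow_le_pow_right (by norm_num) h

lemma walsh_eq_sum (n M : ℕ) (h : n < M) (x : WG) :
    walsh n x = (-1 : ℝ) ^ (∑ k ∈ Finset.range M,
      if n.testBit k then (x k).val else 0) := by
  unfold walsh
  congr 1
  rw [← Finset.sum_range_add_sum_Ico _ (show n + 1 ≤ M by omega)]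
  rw [Finset.sum_Ico_eq_sum_range]
  have : ∀ i ∈ Finset.range (M - (n+1)),
      (if n.testBit (n + 1 + i) then (x (n + 1 + i)).val else 0) = 0 := by
    intro i _
    rw [Nat.testBit_lt_two_pow]
    · simp
    · calc n < 2 ^ n := Nat.lt_two_pow_self (n := n)
      _ ≤ 2 ^ (n + 1 + i) := Nat.pow_le_pow_right (by norm_num) (by omega)
  rw [Finset.sum_congr rfl this]
  simp

lemma walsh_lt_two_pow {A j : ℕ} (hj : j < 2 ^ A) (y : WG) :
    walsh j y = (-1 : ℝ) ^ (∑ k ∈ Finset.range A,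
      if j.testBit k then (y k).val else 0) := by
  rw [walsh_eq_sum j (A + j + 1) (by omega)]
  congr 1
  rw [show A + j + 1 = A + (j + 1) from rfl, my_sum_range_add]
  have : ∀ i ∈ Finset.range (j + 1),
      (if j.testBit (A + i) then (y (A + i)).val else 0) = 0 := by
    intro i _
    rw [Nat.testBit_lt_two_pow (lt_of_lt_of_le hj
      (Nat.pow_le_pow_right (by norm_num) (by omega)))]
    simp
  rw [Finset.sum_congr rfl this]
  simp

lemma walsh_two_pow_add {A j : ℕ} (hj : j < 2 ^ A) (x : WG) :
    walsh (2 ^ A + j) x = rad A x * walsh j x := by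
  have h1 : 2 ^ A + j < 2 ^ (A + 1) := by
    have : (2:ℕ) ^ (A+1) = 2 ^ A + 2 ^ A := by ring
    omega
  rw [walsh_lt_two_pow h1, walsh_lt_two_pow (A := A + 1) (lt_of_lt_of_le hj
    (Nat.pow_le_pow_right (by norm_num) (by omega))) x]
  rw [Finset.sum_range_succ, Finset.sum_range_succ]
  have hA : (2 ^ A + j).testBit A = true := by
    rw [testBit_two_pow_add' hj]; simp
  have hjA : j.testBit A = false := Nat.testBit_lt_two_pow hj
  have hcongr : ∀ k ∈ Finset.range A,
      (if (2 ^ A + j).testBit k then (x k).val else 0)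
        = (if j.testBit k then (x k).val else 0) := by
    intro k hk
    rw [testBit_two_pow_add' hj, if_neg (Finset.mem_range.mp hk).ne]
  rw [Finset.sum_congr rfl hcongr, hA, hjA]
  simp only [if_true, if_false, add_zero, pow_add]
  simp [rad, mul_comm]

lemma kacz_two_pow_add {A j : ℕ} (hj : j < 2 ^ A) (x : WG) :
    kacz (2 ^ A + j) x = rad A x * walsh j (tau A x) := by
  have hlog : Nat.log 2 (2 ^ A + j) = A := by
    apply Nat.log_eq_of_pow_le_of_lt_pow (by omega)
    have : (2:ℕ) ^ (A+1) = 2 ^ A + 2 ^ A := by ring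
    omega
  rw [kacz, if_neg (by positivity), hlog,
    walsh_lt_two_pow (lt_of_lt_of_le hj (le_refl _)) (tau A x)]
  congr 2
  apply Finset.sum_congr rfl
  intro k hk
  have hk' := Finset.mem_range.mp hk
  rw [testBit_two_pow_add' hj, if_neg hk'.ne, tau, if_pos hk']

lemma Dw_two_pow (A : ℕ) (y : WG) :
    Dw (2 ^ A) y = ∏ k ∈ Finset.range A, (1 + (-1 : ℝ) ^ ((y k).val)) := by
  induction A with
  | zero => simp [Dw, walsh]
  | succ A ih =>
    rw [Finset.prod_range_succ, ← ih]
    unfold Dw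
    rw [show (2:ℕ) ^ (A+1) = 2 ^ A + 2 ^ A by ring, my_sum_range_add]
    have : ∀ i ∈ Finset.range (2 ^ A),
        walsh (2 ^ A + i) y = rad A y * walsh i y := fun i hi =>
      walsh_two_pow_add (Finset.mem_range.mp hi) y
    rw [Finset.sum_congr rfl this, ← Finset.mul_sum, rad]
    ring

lemma Dw_two_pow_tau (A : ℕ) (x : WG) : Dw (2 ^ A) (tau A x) = Dw (2 ^ A) x := by
  rw [Dw_two_pow, Dw_two_pow]
  rw [← Finset.prod_range_reflect (fun k => (1 + (-1 : ℝ) ^ ((x k).val))) A]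
  apply Finset.prod_congr rfl
  intro k hk
  rw [tau, if_pos (Finset.mem_range.mp hk)]

lemma Dk_two_pow (A : ℕ) (x : WG) : Dk (2 ^ A) x = Dw (2 ^ A) x := by
  induction A with
  | zero => simp [Dk, Dw, kacz, walsh]
  | succ A ih =>
    unfold Dk Dw
    rw [show (2:ℕ) ^ (A+1) = 2 ^ A + 2 ^ A by ring, my_sum_range_add,
      my_sum_range_add]
    have h1 : ∀ i ∈ Finset.range (2 ^ A),
        kacz (2 ^ A + i) x = rad A x * walsh i (tau A x) := fun i hi =>
      kacz_two_pow_add (Finset.mem_range.mp hi) x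
    have h2 : ∀ i ∈ Finset.range (2 ^ A),
        walsh (2 ^ A + i) x = rad A x * walsh i x := fun i hi =>
      walsh_two_pow_add (Finset.mem_range.mp hi) x
    rw [Finset.sum_congr rfl h1, Finset.sum_congr rfl h2, ← Finset.mul_sum,
      ← Finset.mul_sum]
    have hDk : (∑ k ∈ Finset.range (2 ^ A), kacz k x) = Dk (2 ^ A) x := rfl
    have hDw : ∀ y : WG, (∑ k ∈ Finset.range (2 ^ A), walsh k y) = Dw (2 ^ A) y :=
      fun _ => rfl
    rw [hDk, hDw, hDw, ih, Dw_two_pow_tau]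


/-- For any `A` and `s < 2^A`:
`D_{s+2^A}^κ(x) = D_{2^A}(x) + r_A(x)·D_s^w(τ_A(x))`. -/
theorem kacz_dirichlet_decomposition (A s : ℕ) (hs : s < 2 ^ A) (x : WG) :
    Dk (s + 2 ^ A) x = Dw (2 ^ A) x + rad A x * Dw s (tau A x) := by
  unfold Dk
  rw [Nat.add_comm s, my_sum_range_add]
  have h1 : ∀ i ∈ Finset.range s,
      kacz (2 ^ A + i) x = rad A x * walsh i (tau A x) := fun i hi =>
    kacz_two_pow_add (lt_trans (Finset.mem_range.mp hi) hs) x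
  rw [Finset.sum_congr rfl h1, ← Finset.mul_sum]
  have : (∑ k ∈ Finset.range (2 ^ A), kacz k x) = Dk (2 ^ A) x := rfl
  rw [this, Dk_two_pow]
  rfl

end
end

section
/- (Watari) For f ∈ L_p(G) with 1 ≤ p < ∞ and n ∈ ℕ: ω_p(1/2^n, f)/2 ≤ ‖f − S_{2^n}f‖_p ≤ ω_p(1/2^n, f), where S_{2^n}f is the 2^n-th partial sum of the Walsh-Fourier series and ω_p is the dyadic modulus of continuity. -/
open MeasureTheory Filter Finset
open scoped ENNReal NNReal

noncomputable section

/-- The dyadic modulus of continuity `ω_p(1/2^n, f) = sup_{h ∈ I_n} ‖f(·+h) − f‖_p`. -/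
noncomputable def omegaLp (μ : Measure WG) (p : ℝ≥0∞) (f : WG → ℝ) (n : ℕ) : ℝ≥0∞ :=
  ⨆ h ∈ In n, eLpNorm (fun x => f (x + h) - f x) p μ

namespace Watari

/-! ### combinatorics of walsh functions -/

lemma sum_bits_ext (j : ℕ) (y : WG) {a b : ℕ} (ha : j < 2 ^ a) (hb : j < 2 ^ b) :
    (∑ k ∈ Finset.range a, if j.testBit k then ((y k).val) else 0)
      = ∑ k ∈ Finset.range b, if j.testBit k then ((y k).val) else 0 := by
  wlog h : a ≤ b generalizing a b
  · exact (this hb ha (le_of_not_ge h)).symm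
  refine Finset.sum_subset (Finset.range_subset_range.2 h) fun k hk hk' => ?_
  rw [Nat.testBit_eq_false_of_lt (lt_of_lt_of_le ha (Nat.pow_le_pow_right (by norm_num)
    (by simpa using hk')))]
  simp

lemma walsh_apply (j m : ℕ) (hm : j < 2 ^ m) (y : WG) :
    walsh j y = (-1 : ℝ) ^ (∑ k ∈ Finset.range m, if j.testBit k then ((y k).val) else 0) := by
  unfold walsh
  rw [sum_bits_ext j y (lt_of_lt_of_le (Nat.lt_two_pow_self (n := j))
    (Nat.pow_le_pow_right (by norm_num) (Nat.le_succ j))) hm]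

lemma walsh_prod (j m : ℕ) (hm : j < 2 ^ m) (y : WG) :
    walsh j y = ∏ k ∈ Finset.range m, if j.testBit k then (-1 : ℝ) ^ ((y k).val) else 1 := by
  rw [walsh_apply j m hm, ← Finset.prod_pow_eq_pow_sum]
  exact Finset.prod_congr rfl fun k _ => by split <;> simp

lemma zmod2_val_add (a b : ZMod 2) : (-1 : ℝ) ^ ((a + b).val) = (-1) ^ a.val * (-1) ^ b.val := by
  have : (a + b).val = (a.val + b.val) % 2 := ZMod.val_add a b
  rw [this, ← neg_one_pow_eq_pow_mod_two, pow_add]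

lemma walsh_mul (j m : ℕ) (hm : j < 2 ^ m) (x t : WG) :
    walsh j x * walsh j t = walsh j (x + t) := by
  rw [walsh_prod j m hm, walsh_prod j m hm, walsh_prod j m hm, ← Finset.prod_mul_distrib]
  refine Finset.prod_congr rfl fun k _ => ?_
  split
  · show _ = (-1 : ℝ) ^ ((x k + t k).val)
    rw [zmod2_val_add]
  · rw [one_mul]

lemma walsh_two_pow_add (n j : ℕ) (hj : j < 2 ^ n) (y : WG) :
    walsh (2 ^ n + j) y = (-1 : ℝ) ^ ((y n).val) * walsh j y := by
  have h1 : 2 ^ n + j < 2 ^ (n + 1) := by rw [pow_succ, mul_two]; omega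
  rw [walsh_apply _ (n + 1) h1, walsh_apply j n hj, Finset.sum_range_succ]
  have hbn : (2 ^ n + j).testBit n = true := by
    rw [Nat.testBit_two_pow_add_eq, Nat.testBit_eq_false_of_lt hj]; rfl
  have hsum : (∑ k ∈ Finset.range n, if (2 ^ n + j).testBit k then ((y k).val) else 0)
      = ∑ k ∈ Finset.range n, if j.testBit k then ((y k).val) else 0 := by
    refine Finset.sum_congr rfl fun k hk => ?_
    rw [Nat.testBit_two_pow_add_gt (Finset.mem_range.1 hk)]
  rw [hbn, hsum, if_pos rfl, pow_add, mul_comm]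

lemma zmod2_ne_zero {a : ZMod 2} (h : a ≠ 0) : a.val = 1 := by
  have h1 : a.val < 2 := a.val_lt
  have h2 : a.val ≠ 0 := fun h0 => h ((ZMod.val_eq_zero a).1 h0)
  omega

open scoped Classical in
lemma Dw_two_pow (n : ℕ) (y : WG) :
    Dw (2 ^ n) y = if y ∈ In n then ((2 : ℝ) ^ n) else 0 := by
  induction n with
  | zero =>
    have : walsh 0 y = 1 := by
      rw [walsh_apply 0 0 (by norm_num)]; simp
    simp [Dw, In, cyl, this]
  | succ n ih =>
    have hsplit : Dw (2 ^ (n + 1)) y = Dw (2 ^ n) y + (-1 : ℝ) ^ ((y n).val) * Dw (2 ^ n) y := by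
      unfold Dw
      rw [pow_succ, mul_two, Finset.sum_range_add, Finset.mul_sum]
      congr 1
      exact Finset.sum_congr rfl fun j hj => walsh_two_pow_add n j (Finset.mem_range.1 hj) y
    by_cases h : y ∈ In (n + 1)
    · have h0 : y ∈ In n := fun k hk => h k (Nat.lt_succ_of_lt hk)
      have hn : y n = 0 := h n (Nat.lt_succ_self n)
      rw [hsplit, ih, if_pos h0, if_pos h, hn]
      show (2:ℝ)^n + (-1)^(0:ZMod 2).val * 2^n = 2^(n+1)
      norm_num [ZMod.val_zero]; ring
    · rw [hsplit, ih, if_neg h]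
      by_cases h0 : y ∈ In n
      · have hn : y n ≠ 0 := by
          intro hn
          exact h fun k hk => by
            rcases Nat.lt_succ_iff_lt_or_eq.1 hk with hk' | rfl
            · exact h0 k hk'
            · simpa using hn
        rw [if_pos h0, zmod2_ne_zero hn]
        ring
      · rw [if_neg h0]; ring


/-! ### measurability and the Haar measure -/

lemma measurableSet_cyl (n : ℕ) (x : WG) : MeasurableSet (cyl n x) := by
  have : cyl n x = ⋂ k ∈ Finset.range n, (fun y : WG => y k) ⁻¹' {x k} := by
    ext y; simp [cyl]
  rw [this]
  exact MeasurableSet.biInter (Set.to_countable _) fun k _ =>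
    (measurable_pi_apply k) (MeasurableSet.singleton _)

lemma measurableSet_In (n : ℕ) : MeasurableSet (In n) := measurableSet_cyl n 0

def Cyls : Set (Set WG) := {s | ∃ n x, s = cyl n x}

lemma isPiSystem_Cyls : IsPiSystem Cyls := by
  rintro s ⟨n, x, rfl⟩ t ⟨m, y, rfl⟩ ⟨z, hz1, hz2⟩
  wlog h : n ≤ m generalizing n m x y
  · rw [Set.inter_comm]
    exact this m y n x hz2 hz1 (le_of_not_ge h)
  have hsub : cyl m y ⊆ cyl n x := by
    intro w hw k hk
    rw [hw k (lt_of_lt_of_le hk h), ← hz2 k (lt_of_lt_of_le hk h), hz1 k hk]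
  rw [Set.inter_eq_self_of_subset_right hsub]
  exact ⟨m, y, rfl⟩

lemma coord_set_eq (k : ℕ) (a : ZMod 2) :
    {y : WG | y k = a} = ⋃ v : Fin k → ZMod 2,
      cyl (k + 1) (fun j => if h : j < k then v ⟨j, h⟩ else a) := by
  ext y
  simp only [Set.mem_setOf_eq, Set.mem_iUnion]
  constructor
  · intro hy
    refine ⟨fun j => y j, fun j hj => ?_⟩
    by_cases h : j < k
    · simp [h]
    · have : j = k := by omega
      simp [h, this, hy]
  · rintro ⟨v, hv⟩
    have := hv k (Nat.lt_succ_self k)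
    simpa using this

lemma generateFrom_Cyls :
    (inferInstance : MeasurableSpace WG) = MeasurableSpace.generateFrom Cyls := by
  refine le_antisymm ?_ (MeasurableSpace.generateFrom_le ?_)
  · have hcoord : ∀ k : ℕ, @Measurable WG (ZMod 2) (MeasurableSpace.generateFrom Cyls) _
        (fun y => y k) := by
      intro k
      intro s _
      have : (fun y : WG => y k) ⁻¹' s = ⋃ a ∈ s, {y : WG | y k = a} := by
        ext y; simp
      rw [this]
      refine MeasurableSet.biUnion (Set.to_countable _) fun a _ => ?_
      rw [coord_set_eq k a]
      exact MeasurableSet.iUnion fun v =>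
        MeasurableSpace.measurableSet_generateFrom ⟨k + 1, _, rfl⟩
    rw [show (inferInstance : MeasurableSpace WG) = MeasurableSpace.pi from rfl]
    refine iSup_le fun k => ?_
    exact (measurable_iff_comap_le.1 (hcoord k))
  · rintro s ⟨n, x, rfl⟩
    exact measurableSet_cyl n x

lemma cyl_zero_eq_univ (x : WG) : cyl 0 x = Set.univ := by
  ext y; simp [cyl]

lemma haar_prob {μ : Measure WG} (hμ : IsHaar μ) : IsProbabilityMeasure μ := by
  constructor
  have := hμ 0 0
  rwa [cyl_zero_eq_univ, pow_zero] at this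

lemma measurable_zmod2_fun {β : Type*} [MeasurableSpace β] (g : ZMod 2 → β) : Measurable g :=
  measurable_from_top

lemma measurable_add_left (c : WG) : Measurable (fun x : WG => c + x) := by
  apply measurable_pi_lambda
  intro k
  exact (measurable_zmod2_fun (fun a => c k + a)).comp (measurable_pi_apply k)

lemma zmod2_add_eq_iff : ∀ a x y : ZMod 2, (a + y = x ↔ y = a + x) := by decide

lemma preimage_add_left_cyl (c : WG) (n : ℕ) (x : WG) :
    (fun t : WG => c + t) ⁻¹' cyl n x = cyl n (c + x) := by
  ext y
  show (∀ k < n, c k + y k = x k) ↔ ∀ k < n, y k = c k + x k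
  exact forall₂_congr fun k _ => zmod2_add_eq_iff (c k) (x k) (y k)

lemma map_add_left {μ : Measure WG} (hμ : IsHaar μ) (c : WG) :
    μ.map (fun x => c + x) = μ := by
  haveI := haar_prob hμ
  haveI : IsFiniteMeasure (μ.map (fun x : WG => c + x)) := by
    constructor
    rw [Measure.map_apply (measurable_add_left c) MeasurableSet.univ, Set.preimage_univ]
    exact measure_lt_top μ _
  refine ext_of_generate_finite Cyls generateFrom_Cyls isPiSystem_Cyls ?_ ?_
  · rintro s ⟨n, x, rfl⟩
    rw [Measure.map_apply (measurable_add_left c) (measurableSet_cyl n x),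
      preimage_add_left_cyl, hμ n (c + x), hμ n x]
  · rw [Measure.map_apply (measurable_add_left c) MeasurableSet.univ, Set.preimage_univ]

lemma measurePreserving_add_left {μ : Measure WG} (hμ : IsHaar μ) (c : WG) :
    MeasurePreserving (fun x : WG => c + x) μ μ :=
  ⟨measurable_add_left c, map_add_left hμ c⟩

lemma measurePreserving_add_right {μ : Measure WG} (hμ : IsHaar μ) (c : WG) :
    MeasurePreserving (fun x : WG => x + c) μ μ := by
  have : (fun x : WG => x + c) = (fun x : WG => c + x) := funext fun x => add_comm x c
  rw [this]; exact measurePreserving_add_left hμ c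

lemma zmod2_add_self : ∀ a : ZMod 2, a + a = 0 := by decide

lemma wg_add_add_cancel (c x : WG) : c + (c + x) = x := by
  funext k
  show c k + (c k + x k) = x k
  rw [← add_assoc, zmod2_add_self, zero_add]

/-- left translation as a measurable equivalence -/
def addME (c : WG) : WG ≃ᵐ WG where
  toFun := fun x => c + x
  invFun := fun x => c + x
  left_inv := wg_add_add_cancel c
  right_inv := wg_add_add_cancel c
  measurable_toFun := measurable_add_left c
  measurable_invFun := measurable_add_left c



/-! ### the partial sum as a conditional expectation -/

lemma walsh_norm_le (j : ℕ) (y : WG) : ‖walsh j y‖ ≤ 1 := by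
  unfold walsh
  rw [norm_pow, norm_neg, norm_one, one_pow]

lemma measurable_walsh (j : ℕ) : Measurable (walsh j) := by
  unfold walsh
  have hsum : Measurable (fun y : WG =>
      ∑ k ∈ Finset.range (j + 1), if j.testBit k then ((y k).val) else 0) := by
    apply Finset.measurable_sum
    intro k _
    by_cases h : j.testBit k
    · simp only [h, if_true]
      exact (measurable_zmod2_fun ZMod.val).comp (measurable_pi_apply k)
    · simp only [h, if_false]; exact measurable_const
  exact (measurable_from_top (f := fun m : ℕ => (-1 : ℝ) ^ m)).comp hsum

lemma measurable_partialW (μ : Measure WG) (N : ℕ) (f : WG → ℝ) :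
    Measurable (partialW μ N f) := by
  unfold partialW
  exact Finset.measurable_sum _ fun j _ => (measurable_walsh j).const_mul _

lemma zmod2_add_eq_zero : ∀ a b : ZMod 2, (a + b = 0 ↔ b = a) := by decide

open scoped Classical in
lemma partialW_two_pow {μ : Measure WG} {f : WG → ℝ} (hf : Integrable f μ)
    (n : ℕ) (x : WG) :
    partialW μ (2 ^ n) f x = (2 ^ n : ℝ) * ∫ t in cyl n x, f t ∂μ := by
  have hint : ∀ j : ℕ, Integrable (fun t => f t * walsh j t * walsh j x) μ := by
    intro j
    have hb : Integrable (fun t => (walsh j t * walsh j x) * f t) μ :=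
      hf.bdd_mul ((measurable_walsh j).mul_const _).aestronglyMeasurable
        (Filter.Eventually.of_forall fun t => by
          rw [norm_mul]
          calc ‖walsh j t‖ * ‖walsh j x‖ ≤ 1 * 1 :=
                mul_le_mul (walsh_norm_le j t) (walsh_norm_le j x) (norm_nonneg _) zero_le_one
            _ = 1 := mul_one 1)
    exact hb.congr (Filter.Eventually.of_forall fun t => by ring)
  unfold partialW fhatW
  have h1 : ∀ j ∈ Finset.range (2 ^ n), (∫ t, f t * walsh j t ∂μ) * walsh j x
      = ∫ t, f t * walsh j t * walsh j x ∂μ := fun j _ => (integral_mul_const _ _).symm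
  rw [Finset.sum_congr rfl h1, ← integral_finset_sum _ (fun j _ => hint j)]
  have h2 : ∀ t, (∑ j ∈ Finset.range (2 ^ n), f t * walsh j t * walsh j x)
      = Set.indicator (cyl n x) (fun t => (2 ^ n : ℝ) * f t) t := by
    intro t
    have hw : ∀ j ∈ Finset.range (2 ^ n),
        f t * walsh j t * walsh j x = f t * walsh j (x + t) := by
      intro j _
      rw [mul_assoc, walsh_mul j (j + 1) (lt_of_lt_of_le (Nat.lt_two_pow_self (n := j))
        (Nat.pow_le_pow_right (by norm_num) (Nat.le_succ j))) t x, add_comm t x]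
    rw [Finset.sum_congr rfl hw, ← Finset.mul_sum]
    show f t * Dw (2 ^ n) (x + t) = _
    rw [Dw_two_pow]
    have hmem : (x + t ∈ In n) ↔ t ∈ cyl n x := by
      show (∀ k < n, (x + t) k = (0 : WG) k) ↔ ∀ k < n, t k = x k
      refine forall₂_congr fun k _ => ?_
      show x k + t k = (0 : ZMod 2) ↔ t k = x k
      exact zmod2_add_eq_zero (x k) (t k)
    by_cases h : t ∈ cyl n x
    · rw [Set.indicator_of_mem h, if_pos (hmem.2 h)]; ring
    · rw [Set.indicator_of_notMem h, if_neg (fun hh => h (hmem.1 hh)), mul_zero]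
  rw [integral_congr_ae (Filter.Eventually.of_forall h2),
    integral_indicator (measurableSet_cyl n x), integral_const_mul]

lemma cyl_add_of_In {h : WG} {n : ℕ} (hh : h ∈ In n) (x : WG) : cyl n (x + h) = cyl n x := by
  have hk : ∀ k < n, (x + h) k = x k := by
    intro k hk
    show x k + h k = x k
    have : h k = 0 := hh k hk
    rw [this, add_zero]
  ext y
  exact forall₂_congr fun k hkn => by rw [hk k hkn]

lemma partialW_translate {μ : Measure WG} {f : WG → ℝ} (hf : Integrable f μ)
    (n : ℕ) {h : WG} (hh : h ∈ In n) (x : WG) :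
    partialW μ (2 ^ n) f (x + h) = partialW μ (2 ^ n) f x := by
  rw [partialW_two_pow hf n, partialW_two_pow hf n, cyl_add_of_In hh]

lemma preimage_add_left_cyl_self (x : WG) (n : ℕ) :
    (fun h : WG => x + h) ⁻¹' cyl n x = In n := by
  rw [preimage_add_left_cyl]
  ext y
  show (∀ k < n, y k = (x + x) k) ↔ ∀ k < n, y k = (0 : WG) k
  refine forall₂_congr fun k _ => ?_
  rw [show (x + x) k = (0 : WG) k from zmod2_add_self (x k)]

lemma setIntegral_translate {μ : Measure WG} (hμ : IsHaar μ) (f : WG → ℝ) (x : WG) (n : ℕ) :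
    ∫ h in In n, f (x + h) ∂μ = ∫ t in cyl n x, f t ∂μ := by
  have hemb : MeasurableEmbedding (fun h : WG => x + h) := (addME x).measurableEmbedding
  rw [← preimage_add_left_cyl_self x n]
  exact (measurePreserving_add_left hμ x).setIntegral_preimage_emb hemb f (cyl n x)

lemma In_toReal {μ : Measure WG} (hμ : IsHaar μ) (n : ℕ) :
    (μ (In n)).toReal = (2⁻¹ : ℝ) ^ n := by
  rw [show μ (In n) = 2⁻¹ ^ n from hμ n 0]
  simp [ENNReal.toReal_pow]

lemma sub_partialW_eq {μ : Measure WG} (hμ : IsHaar μ) {f : WG → ℝ} (hf : Integrable f μ)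
    (n : ℕ) (x : WG) :
    f x - partialW μ (2 ^ n) f x = (2 ^ n : ℝ) * ∫ h in In n, (f x - f (x + h)) ∂μ := by
  haveI := haar_prob hμ
  have hint2 : Integrable (fun h => f (x + h)) μ :=
    ((measurePreserving_add_left hμ x).integrable_comp hf.aestronglyMeasurable).2 hf
  rw [integral_sub (integrableOn_const (measure_ne_top μ _) : IntegrableOn (fun _ => f x) (In n) μ) hint2.integrableOn,
    setIntegral_translate hμ f x n, setIntegral_const, measureReal_def, In_toReal hμ n,
    partialW_two_pow hf n, smul_eq_mul]
  have h2n : (2 : ℝ) ^ n * 2⁻¹ ^ n = 1 := by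
    rw [← mul_pow]; norm_num
  linear_combination (-(f x)) * h2n


/-! ### the two bounds -/

lemma eLpNorm_comp_add_right {μ : Measure WG} (hμ : IsHaar μ) {g : WG → ℝ}
    (hg : AEStronglyMeasurable g μ) (c : WG) (p : ℝ≥0∞) :
    eLpNorm (fun x => g (x + c)) p μ = eLpNorm g p μ :=
  eLpNorm_comp_measurePreserving hg (measurePreserving_add_right hμ c)

lemma lower_bound {μ : Measure WG} (hμ : IsHaar μ) {p : ℝ≥0∞} (hp : 1 ≤ p)
    {f : WG → ℝ} (hf : MemLp f p μ) (n : ℕ) :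
    omegaLp μ p f n ≤ 2 * eLpNorm (fun x => f x - partialW μ (2 ^ n) f x) p μ := by
  haveI := haar_prob hμ
  have hint : Integrable f μ := hf.integrable hp
  set g := fun x => f x - partialW μ (2 ^ n) f x with hgdef
  have hgm : AEStronglyMeasurable g μ :=
    hf.aestronglyMeasurable.sub (measurable_partialW μ _ f).aestronglyMeasurable
  refine iSup₂_le fun h hh => ?_
  have hgm' : AEStronglyMeasurable (fun x => g (x + h)) μ :=
    hgm.comp_quasiMeasurePreserving (measurePreserving_add_right hμ h).quasiMeasurePreserving
  calc eLpNorm (fun x => f (x + h) - f x) p μ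
      = eLpNorm ((fun x => g (x + h)) - g) p μ := by
        congr 1
        funext x
        show f (x + h) - f x = g (x + h) - g x
        simp only [hgdef]
        rw [partialW_translate hint n hh x]
        ring
    _ ≤ eLpNorm (fun x => g (x + h)) p μ + eLpNorm g p μ := eLpNorm_sub_le hgm' hgm hp
    _ = 2 * eLpNorm g p μ := by rw [eLpNorm_comp_add_right hμ hgm h p, two_mul]

lemma pow_lintegral_le {α : Type*} [MeasurableSpace α] (ν : Measure α) [IsProbabilityMeasure ν]
    {H : α → ℝ≥0∞} (hH : AEMeasurable H ν) {q : ℝ} (hq : 1 ≤ q) :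
    (∫⁻ h, H h ∂ν) ^ q ≤ ∫⁻ h, H h ^ q ∂ν := by
  rcases eq_or_lt_of_le hq with rfl | hq1
  · simp
  · have hq0 : (0 : ℝ) < q := lt_trans one_pos hq1
    have hpq : q.HolderConjugate (Real.conjExponent q) := Real.HolderConjugate.conjExponent hq1
    have h := ENNReal.lintegral_mul_le_Lp_mul_Lq ν hpq hH (aemeasurable_const (b := (1 : ℝ≥0∞)))
    simp only [Pi.mul_apply, mul_one, ENNReal.one_rpow, lintegral_const, measure_univ,
      ENNReal.one_rpow, one_mul] at h
    calc (∫⁻ h, H h ∂ν) ^ q ≤ ((∫⁻ h, H h ^ q ∂ν) ^ (1 / q)) ^ q :=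
          ENNReal.rpow_le_rpow h hq0.le
      _ = ∫⁻ h, H h ^ q ∂ν := by
          rw [← ENNReal.rpow_mul, one_div_mul_cancel hq0.ne', ENNReal.rpow_one]

lemma measurable_wg_add : Measurable (fun z : WG × WG => z.1 + z.2) := by
  apply measurable_pi_lambda
  intro k
  have h : (fun z : WG × WG => (z.1 + z.2) k)
      = (fun p : ZMod 2 × ZMod 2 => p.1 + p.2) ∘ (fun z : WG × WG => (z.1 k, z.2 k)) := rfl
  rw [h]
  exact (measurable_of_countable _).comp
    (Measurable.prodMk (measurable_fst.eval) (measurable_snd.eval))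

lemma upper_bound {μ : Measure WG} (hμ : IsHaar μ) {p : ℝ≥0∞} (hp : 1 ≤ p) (hp' : p ≠ ∞)
    {f : WG → ℝ} (hfm : Measurable f) (hf : MemLp f p μ) (n : ℕ) :
    eLpNorm (fun x => f x - partialW μ (2 ^ n) f x) p μ ≤ omegaLp μ p f n := by
  haveI := haar_prob hμ
  have hp0 : p ≠ 0 := (lt_of_lt_of_le one_pos hp).ne'
  set q := p.toReal with hqdef
  have hq1 : (1 : ℝ) ≤ q := by
    rw [show (1 : ℝ) = (1 : ℝ≥0∞).toReal from ENNReal.toReal_one.symm]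
    exact ENNReal.toReal_mono hp' hp
  have hq0 : (0 : ℝ) < q := lt_of_lt_of_le one_pos hq1
  have hint : Integrable f μ := hf.integrable hp
  set ν : Measure WG := (2 ^ n : ℝ≥0∞) • μ.restrict (In n) with hν
  haveI hprob : IsProbabilityMeasure ν := by
    constructor
    rw [hν, Measure.smul_apply, Measure.restrict_apply MeasurableSet.univ, Set.univ_inter,
      show μ (In n) = 2⁻¹ ^ n from hμ n 0, smul_eq_mul, ← mul_pow,
      ENNReal.mul_inv_cancel two_ne_zero ENNReal.ofNat_ne_top, one_pow]
  set g := fun x => f x - partialW μ (2 ^ n) f x with hgdef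
  have h2n : (‖(2 ^ n : ℝ)‖₊ : ℝ≥0∞) = 2 ^ n := by
    rw [nnnorm_pow]
    push_cast
    norm_num
  have key1 : ∀ x, (‖g x‖₊ : ℝ≥0∞) ≤ ∫⁻ h, (‖f x - f (x + h)‖₊ : ℝ≥0∞) ∂ν := by
    intro x
    calc (‖g x‖₊ : ℝ≥0∞)
        = (2 ^ n : ℝ≥0∞) * ‖∫ h in In n, (f x - f (x + h)) ∂μ‖₊ := by
          rw [show g x = (2 ^ n : ℝ) * ∫ h in In n, (f x - f (x + h)) ∂μ from
            sub_partialW_eq hμ hint n x, nnnorm_mul, ENNReal.coe_mul, h2n]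
      _ ≤ (2 ^ n : ℝ≥0∞) * ∫⁻ h in In n, (‖f x - f (x + h)‖₊ : ℝ≥0∞) ∂μ :=
          mul_le_mul_right (enorm_integral_le_lintegral_enorm _) _
      _ = ∫⁻ h, (‖f x - f (x + h)‖₊ : ℝ≥0∞) ∂ν := by rw [hν, lintegral_smul_measure, smul_eq_mul]
  have hHm : Measurable (fun z : WG × WG => (‖f z.1 - f (z.1 + z.2)‖₊ : ℝ≥0∞) ^ q) :=
    (((hfm.comp measurable_fst).sub (hfm.comp measurable_wg_add)).enorm).pow_const q
  have big : (∫⁻ x, (‖g x‖₊ : ℝ≥0∞) ^ q ∂μ) ≤ (omegaLp μ p f n) ^ q := by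
    calc (∫⁻ x, (‖g x‖₊ : ℝ≥0∞) ^ q ∂μ)
        ≤ ∫⁻ x, ∫⁻ h, (‖f x - f (x + h)‖₊ : ℝ≥0∞) ^ q ∂ν ∂μ := by
          refine lintegral_mono fun x => ?_
          refine le_trans (ENNReal.rpow_le_rpow (key1 x) hq0.le) ?_
          refine pow_lintegral_le ν ?_ hq1
          exact (measurable_const.sub (hfm.comp (measurable_add_left x))).enorm.aemeasurable
      _ = ∫⁻ h, ∫⁻ x, (‖f x - f (x + h)‖₊ : ℝ≥0∞) ^ q ∂μ ∂ν :=
          lintegral_lintegral_swap hHm.aemeasurable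
      _ ≤ ∫⁻ h, (omegaLp μ p f n) ^ q ∂ν := by
          refine lintegral_mono_ae ?_
          have hae : ∀ᵐ h ∂ν, h ∈ In n := by
            rw [hν]
            exact Measure.ae_smul_measure (ae_restrict_mem (measurableSet_In n)) _
          filter_upwards [hae] with h hh
          have heq : ∫⁻ x, (‖f x - f (x + h)‖₊ : ℝ≥0∞) ^ q ∂μ
              = (eLpNorm (fun x => f (x + h) - f x) p μ) ^ q := by
            rw [eLpNorm_eq_lintegral_rpow_enorm_toReal hp0 hp', ← ENNReal.rpow_mul,
              one_div_mul_cancel hq0.ne', ENNReal.rpow_one]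
            refine lintegral_congr fun x => ?_
            rw [show f x - f (x + h) = -(f (x + h) - f x) from by ring, nnnorm_neg]
            rfl
          rw [heq]
          refine ENNReal.rpow_le_rpow ?_ hq0.le
          exact le_iSup₂ (f := fun (h : WG) (_ : h ∈ In n) =>
            eLpNorm (fun x => f (x + h) - f x) p μ) h hh
      _ = (omegaLp μ p f n) ^ q := by
          rw [lintegral_const, measure_univ, mul_one]
  rw [eLpNorm_eq_lintegral_rpow_enorm_toReal hp0 hp']
  calc (∫⁻ x, (‖g x‖₊ : ℝ≥0∞) ^ q ∂μ) ^ (1 / q)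
      ≤ ((omegaLp μ p f n) ^ q) ^ (1 / q) := ENNReal.rpow_le_rpow big (by positivity)
    _ = omegaLp μ p f n := by
        rw [← ENNReal.rpow_mul, mul_one_div_cancel hq0.ne', ENNReal.rpow_one]

end Watari

open Watari in
/-- Watari: `ω_p(1/2^n,f)/2 ≤ ‖f − S_{2^n}f‖_p ≤ ω_p(1/2^n,f)`. -/
theorem watari_modulus (μ : Measure WG) (hμ : IsHaar μ) (p : ℝ≥0∞)
    (hp : 1 ≤ p) (hp' : p ≠ ∞) (f : WG → ℝ) (hf : MemLp f p μ) (n : ℕ) :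
    omegaLp μ p f n / 2 ≤ eLpNorm (fun x => f x - partialW μ (2 ^ n) f x) p μ ∧
      eLpNorm (fun x => f x - partialW μ (2 ^ n) f x) p μ ≤ omegaLp μ p f n := by
  constructor
  · exact ENNReal.div_le_of_le_mul' (lower_bound hμ hp hf n)
  · have hae : AEMeasurable f μ := hf.aestronglyMeasurable.aemeasurable
    set f' := hae.mk f with hf'def
    have hf'meas : Measurable f' := hae.measurable_mk
    have hff' : f =ᵐ[μ] f' := hae.ae_eq_mk
    have hf' : MemLp f' p μ := hf.ae_eq hff'
    have hpw : ∀ N x, partialW μ N f x = partialW μ N f' x := by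
      intro N x
      unfold partialW fhatW
      refine Finset.sum_congr rfl fun j _ => ?_
      rw [integral_congr_ae (f := fun x => f x * walsh j x) (g := fun x => f' x * walsh j x) (hff'.mul (Filter.EventuallyEq.rfl (f := walsh j)))]
    have heLp : eLpNorm (fun x => f x - partialW μ (2 ^ n) f x) p μ
        = eLpNorm (fun x => f' x - partialW μ (2 ^ n) f' x) p μ := by
      refine eLpNorm_congr_ae ?_
      filter_upwards [hff'] with x hx
      rw [hx, hpw (2 ^ n) x]
    have homega : omegaLp μ p f n = omegaLp μ p f' n := by
      unfold omegaLp
      refine iSup_congr fun h => iSup_congr fun _ => ?_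
      refine eLpNorm_congr_ae ?_
      have h1 : (fun x => f (x + h)) =ᵐ[μ] fun x => f' (x + h) :=
        (measurePreserving_add_right hμ h).quasiMeasurePreserving.ae_eq_comp hff'
      exact h1.sub hff'
    rw [heLp, homega]
    exact upper_bound hμ hp hp' hf'meas hf' n


end
end

section
/- For n ∈ ℕ and 2^m < n ≤ 2^{m+1}, and any integrable f on G, the identity σ_n^κ(S_{2^m}f) − S_{2^m}f = (2^m/n)·S_{2^m}(σ_{2^m}f − f) holds, where σ_n^κ denotes the n-th Walsh-Kaczmarz-Fejér mean. -/
open MeasureTheory Filter Finset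
open scoped ENNReal NNReal

lemma sum_pow_lt (b : ℕ → Bool) (s : ℕ) :
    (∑ t ∈ range s, if b t then 2 ^ t else 0) < 2 ^ s := by
  have h1 : (∑ t ∈ range s, if b t then 2 ^ t else 0) ≤ ∑ t ∈ range s, 2 ^ t := by
    apply Finset.sum_le_sum; intro i _; split <;> simp
  have h2 : ∑ t ∈ range s, 2 ^ t = 2 ^ s - 1 := by
    rw [Nat.geomSum_eq (le_refl 2)]; omega
  have h3 : 0 < 2 ^ s := by positivity
  omega

/-- testBit of a sum of distinct powers of two. -/
lemma testBit_sum_pow (b : ℕ → Bool) : ∀ (s k : ℕ),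
    (∑ t ∈ range s, if b t then 2 ^ t else 0).testBit k = (b k && decide (k < s)) := by
  intro s
  induction s with
  | zero => simp
  | succ s ih =>
    have hS := sum_pow_lt b s
    intro k
    rw [Finset.sum_range_succ]
    by_cases hb : b s
    · rw [if_pos hb, add_comm]
      rcases lt_trichotomy k s with hk | hk | hk
      · rw [Nat.testBit_two_pow_add_gt hk, ih k]
        simp [hk, Nat.lt_succ_of_lt hk]
      · subst hk
        rw [Nat.testBit_two_pow_add_eq, Nat.testBit_lt_two_pow hS]
        simp [hb]
      · have : 2 ^ s + (∑ t ∈ range s, if b t then 2 ^ t else 0) < 2 ^ k := by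
          have h4 : 2 ^ (s+1) ≤ 2 ^ k := Nat.pow_le_pow_right (by norm_num) hk
          rw [Nat.pow_succ] at h4; omega
        rw [Nat.testBit_lt_two_pow this]
        simp; omega
    · rw [if_neg hb, add_zero, ih k]
      rcases eq_or_ne k s with rfl | hk
      · simp [hb]
      · by_cases h : k < s
        · simp [h, Nat.lt_succ_of_lt h]
        · have : ¬ k < s + 1 := by omega
          simp [h, this]

lemma testBit_log_self {i : ℕ} (hi : i ≠ 0) : i.testBit (Nat.log 2 i) = true := by
  have h1 : 2 ^ Nat.log 2 i ≤ i := Nat.pow_log_le_self 2 hi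
  have h2 : i < 2 ^ (Nat.log 2 i + 1) := Nat.lt_pow_succ_log_self (by norm_num) i
  rw [Nat.testBit_eq_decide_div_mod_eq]
  have hd : i / 2 ^ Nat.log 2 i = 1 := by
    apply Nat.div_eq_of_lt_le
    · omega
    · rw [Nat.pow_succ] at h2; omega
  simp [hd]

lemma testBit_false_of_lt {i t k : ℕ} (h : i < 2 ^ t) (hk : t ≤ k) : i.testBit k = false :=
  Nat.testBit_lt_two_pow (lt_of_lt_of_le h (Nat.pow_le_pow_right (by norm_num) hk))

/-- The bit-reversal permutation within dyadic blocks underlying Kaczmarz functions. -/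
noncomputable def piIdx (i : ℕ) : ℕ :=
  if i = 0 then 0 else
    2 ^ Nat.log 2 i + ∑ t ∈ range (Nat.log 2 i),
      if i.testBit (Nat.log 2 i - 1 - t) then 2 ^ t else 0

lemma piIdx_zero : piIdx 0 = 0 := rfl

lemma piIdx_mem_block {i : ℕ} (hi : i ≠ 0) :
    2 ^ Nat.log 2 i ≤ piIdx i ∧ piIdx i < 2 ^ (Nat.log 2 i + 1) := by
  have hS := sum_pow_lt (fun t => i.testBit (Nat.log 2 i - 1 - t)) (Nat.log 2 i)
  rw [piIdx, if_neg hi]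
  refine ⟨by omega, ?_⟩
  rw [Nat.pow_succ]; omega

lemma log_piIdx {i : ℕ} (hi : i ≠ 0) : Nat.log 2 (piIdx i) = Nat.log 2 i :=
  Nat.log_eq_of_pow_le_of_lt_pow (piIdx_mem_block hi).1 (piIdx_mem_block hi).2

lemma piIdx_testBit {i : ℕ} (hi : i ≠ 0) (k : ℕ) :
    (piIdx i).testBit k =
      if k = Nat.log 2 i then true
      else if k < Nat.log 2 i then i.testBit (Nat.log 2 i - 1 - k) else false := by
  have hS := sum_pow_lt (fun t => i.testBit (Nat.log 2 i - 1 - t)) (Nat.log 2 i)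
  rw [piIdx, if_neg hi]
  rcases lt_trichotomy k (Nat.log 2 i) with hk | hk | hk
  · rw [Nat.testBit_two_pow_add_gt hk,
      testBit_sum_pow (fun t => i.testBit (Nat.log 2 i - 1 - t))]
    simp [hk]
    omega
  · subst hk
    rw [Nat.testBit_two_pow_add_eq, Nat.testBit_lt_two_pow hS]
    simp
  · have hlt : 2 ^ Nat.log 2 i +
        (∑ t ∈ range (Nat.log 2 i), if i.testBit (Nat.log 2 i - 1 - t) then 2 ^ t else 0)
        < 2 ^ k := by
      have h4 : 2 ^ (Nat.log 2 i + 1) ≤ 2 ^ k := Nat.pow_le_pow_right (by norm_num) hk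
      rw [Nat.pow_succ] at h4; omega
    rw [Nat.testBit_lt_two_pow hlt]
    rw [if_neg (by omega), if_neg (by omega)]

lemma piIdx_ne_zero {i : ℕ} (hi : i ≠ 0) : piIdx i ≠ 0 := by
  have h1 := (piIdx_mem_block hi).1
  have h2 : 0 < 2 ^ Nat.log 2 i := by positivity
  omega

lemma piIdx_piIdx (i : ℕ) : piIdx (piIdx i) = i := by
  rcases eq_or_ne i 0 with rfl | hi
  · rfl
  have hpi := piIdx_ne_zero hi
  have hlog : Nat.log 2 (piIdx i) = Nat.log 2 i := log_piIdx hi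
  apply Nat.eq_of_testBit_eq
  intro k
  rw [piIdx_testBit hpi, hlog]
  rcases lt_trichotomy k (Nat.log 2 i) with hk | hk | hk
  · rw [if_neg (by omega), if_pos hk, piIdx_testBit hi]
    have h1 : ¬ (Nat.log 2 i - 1 - k = Nat.log 2 i) := by omega
    have h2 : Nat.log 2 i - 1 - k < Nat.log 2 i := by omega
    rw [if_neg h1, if_pos h2]
    congr 1; omega
  · subst hk
    rw [if_pos rfl, testBit_log_self hi]
  · rw [if_neg (by omega), if_neg (by omega)]
    exact (testBit_false_of_lt (Nat.lt_pow_succ_log_self (by norm_num) i) (by omega)).symm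

lemma piIdx_lt_pow {i t : ℕ} (h : i < 2 ^ t) : piIdx i < 2 ^ t := by
  rcases eq_or_ne i 0 with rfl | hi
  · rw [piIdx_zero]; positivity
  have hlog : Nat.log 2 i < t := Nat.log_lt_of_lt_pow hi h
  exact lt_of_lt_of_le (piIdx_mem_block hi).2 (Nat.pow_le_pow_right (by norm_num) hlog)

lemma le_piIdx_of_le {i t : ℕ} (h : 2 ^ t ≤ i) : 2 ^ t ≤ piIdx i := by
  have hp : 0 < 2 ^ t := by positivity
  have hi : i ≠ 0 := by omega
  have hl : t ≤ Nat.log 2 i := Nat.le_log_of_pow_le (by norm_num) h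
  exact le_trans (Nat.pow_le_pow_right (by norm_num) hl) (piIdx_mem_block hi).1

/-- Reindexing sums over a dyadic block by the Kaczmarz permutation. -/
lemma sum_piIdx {M : Type*} [AddCommMonoid M] (t : ℕ) (F : ℕ → M) :
    ∑ i ∈ range (2 ^ t), F (piIdx i) = ∑ i ∈ range (2 ^ t), F i := by
  apply Finset.sum_nbij' (fun i => piIdx i) (fun i => piIdx i)
  · intro a ha; rw [Finset.mem_range] at *; exact piIdx_lt_pow ha
  · intro a ha; rw [Finset.mem_range] at *; exact piIdx_lt_pow ha
  · intro a _; exact piIdx_piIdx a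
  · intro a _; exact piIdx_piIdx a
  · intro a _; rfl

noncomputable section

lemma sum_testBit_ext (n M L : ℕ) (h : n < 2 ^ M) (hML : M ≤ L) (x : WG) :
    (∑ k ∈ Finset.range L, if n.testBit k then (x k).val else 0)
      = ∑ k ∈ Finset.range M, if n.testBit k then (x k).val else 0 := by
  refine (Finset.sum_subset (Finset.range_subset_range.2 hML) ?_).symm
  intro k _ hk
  rw [Finset.mem_range, not_lt] at hk
  have hb : n.testBit k = false := testBit_false_of_lt h hk
  simp [hb]

lemma walsh_eq_pow (n M : ℕ) (h : n < 2 ^ M) (x : WG) :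
    walsh n x = (-1 : ℝ) ^ (∑ k ∈ Finset.range M, if n.testBit k then (x k).val else 0) := by
  rw [walsh]
  congr 1
  have hn : n < 2 ^ (n + 1) := lt_of_lt_of_le (Nat.lt_two_pow_self (n := n))
    (Nat.pow_le_pow_right (by norm_num) (by omega))
  rw [← sum_testBit_ext n (n+1) (max (n+1) M) hn (le_max_left _ _) x,
    sum_testBit_ext n M (max (n+1) M) h (le_max_right _ _) x]

lemma walsh_zero (x : WG) : walsh 0 x = 1 := by
  simp [walsh]

lemma walsh_mul (a b : ℕ) (x : WG) :
    walsh a x * walsh b x = walsh (a ^^^ b) x := by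
  set M := a + b + 1 with hM
  have ha : a < 2 ^ M := lt_of_le_of_lt (by omega) (Nat.lt_two_pow_self (n := M))
  have hb : b < 2 ^ M := lt_of_le_of_lt (by omega) (Nat.lt_two_pow_self (n := M))
  have hab : a ^^^ b < 2 ^ M := Nat.xor_lt_two_pow ha hb
  rw [walsh_eq_pow a M ha x, walsh_eq_pow b M hb x, walsh_eq_pow _ M hab x]
  rw [← Finset.prod_pow_eq_pow_sum, ← Finset.prod_pow_eq_pow_sum,
    ← Finset.prod_pow_eq_pow_sum, ← Finset.prod_mul_distrib]
  apply Finset.prod_congr rfl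
  intro k _
  rw [← pow_add]
  cases h1 : a.testBit k <;> cases h2 : b.testBit k <;>
    simp [Nat.testBit_xor, h1, h2]

lemma nat_xor_eq_zero {a b : ℕ} : a ^^^ b = 0 ↔ a = b := by
  constructor
  · intro h
    apply Nat.eq_of_testBit_eq
    intro i
    have := congrArg (fun z => Nat.testBit z i) h
    simp only [Nat.testBit_xor, Nat.zero_testBit] at this
    cases ha : a.testBit i <;> cases hb : b.testBit i <;> simp_all
  · rintro rfl; exact Nat.xor_self a

lemma walsh_measurable (n : ℕ) : Measurable (walsh n) := by
  have he : Measurable fun x : WG =>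
      (∑ k ∈ Finset.range (n+1), if n.testBit k then (x k).val else 0) := by
    apply Finset.measurable_sum
    intro k _
    by_cases h : n.testBit k
    · simp only [h, if_true]
      exact (Measurable.of_discrete (f := ZMod.val)).comp (measurable_pi_apply k)
    · simp only [h, if_false]
      exact measurable_const
  exact (Measurable.of_discrete (f := fun e : ℕ => (-1:ℝ)^e)).comp he

lemma measurableSet_cyl (m : ℕ) (x : WG) : MeasurableSet (cyl m x) := by
  have : cyl m x = ⋂ (k : ℕ) (_ : k < m), (fun y : WG => y k) ⁻¹' {x k} := by
    ext y; simp [cyl, Set.mem_iInter]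
  rw [this]
  exact MeasurableSet.iInter fun k => MeasurableSet.iInter fun _ =>
    (measurable_pi_apply k) (measurableSet_singleton _)

lemma zmod2_succ_val (a : ZMod 2) : (-1 : ℝ) ^ ((a + 1).val) = -(-1 : ℝ) ^ a.val := by
  have h : a = 0 ∨ a = 1 := by
    fin_cases a
    · exact Or.inl rfl
    · exact Or.inr rfl
  rcases h with rfl | rfl
  · rw [show ((0 : ZMod 2) + 1).val = 1 from rfl, show (0 : ZMod 2).val = 0 from rfl]
    norm_num
  · rw [show ((1 : ZMod 2) + 1).val = 0 from rfl, show (1 : ZMod 2).val = 1 from rfl]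
    norm_num

lemma walsh_flip {n : ℕ} (t : ℕ) (ht : n.testBit t = true) (y : WG) :
    walsh n (Function.update y t (y t + 1)) = - walsh n y := by
  have h2t : 2 ^ t ≤ n := by
    by_contra h
    rw [Nat.testBit_lt_two_pow (by omega)] at ht
    exact Bool.false_ne_true ht
  have htn : t < n + 1 := lt_of_lt_of_le (Nat.lt_two_pow_self (n := t)) (by omega)
  have htm : t ∈ Finset.range (n+1) := Finset.mem_range.2 htn
  rw [walsh, walsh]
  rw [← Finset.sum_erase_add _ _ htm, ← Finset.sum_erase_add _ _ htm]
  have hsame : (∑ k ∈ (Finset.range (n+1)).erase t,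
      if n.testBit k then ((Function.update y t (y t + 1)) k).val else 0)
      = ∑ k ∈ (Finset.range (n+1)).erase t, if n.testBit k then (y k).val else 0 := by
    apply Finset.sum_congr rfl
    intro k hk
    have hkt : k ≠ t := Finset.ne_of_mem_erase hk
    rw [Function.update_of_ne hkt]
  rw [hsame, if_pos ht, if_pos ht, Function.update_self]
  rw [pow_add, pow_add, zmod2_succ_val]
  ring

section Haar
variable {μ : Measure WG} (hμ : IsHaar μ)
include hμ

lemma haar_univ : μ Set.univ = 1 := by
  have h := hμ 0 0
  have : cyl 0 (0 : WG) = Set.univ := by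
    ext y; simp [cyl]
  rw [this] at h
  simpa using h

lemma haar_prob : IsProbabilityMeasure μ := ⟨haar_univ hμ⟩

lemma walsh_integrable (n : ℕ) : Integrable (walsh n) μ := by
  haveI := haar_prob hμ
  refine Integrable.mono' (integrable_const 1)
    (walsh_measurable n).aestronglyMeasurable ?_
  filter_upwards with x
  rw [walsh]
  simp

lemma integral_walsh {n : ℕ} (hn : n ≠ 0) : ∫ x, walsh n x ∂μ = 0 := by
  haveI := haar_prob hμ
  set M := n + 1 with hM
  set ext : (Fin M → ZMod 2) → WG :=
    fun z k => if h : k < M then z ⟨k, h⟩ else 0 with hext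
  set C : (Fin M → ZMod 2) → Set WG := fun z => cyl M (ext z) with hC
  have hmeas : ∀ z, MeasurableSet (C z) := fun z => measurableSet_cyl M (ext z)
  have hdisj : Pairwise (Function.onFun Disjoint C) := by
    intro z z' hzz'
    rw [Function.onFun]
    rw [Set.disjoint_left]
    intro y hy hy'
    apply hzz'
    funext k
    have e1 := hy k.1 k.2
    have e2 := hy' k.1 k.2
    rw [e1] at e2
    simpa [hext, k.2] using e2
  have hunion : (⋃ z, C z) = Set.univ := by
    ext y
    simp only [Set.mem_iUnion, Set.mem_univ, iff_true]
    refine ⟨fun k => y k.1, fun k hk => ?_⟩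
    simp [hext, hk]
  have hconst : ∀ z, ∀ y ∈ C z, walsh n y = walsh n (ext z) := by
    intro z y hy
    rw [walsh, walsh]
    congr 1
    apply Finset.sum_congr rfl
    intro k hk
    rw [Finset.mem_range] at hk
    rw [hy k (by omega)]
  have hμC : ∀ z, (μ (C z)).toReal = (1/2 : ℝ) ^ M := by
    intro z
    rw [hμ M (ext z), ENNReal.toReal_pow]
    norm_num
  calc ∫ x, walsh n x ∂μ = ∫ x in Set.univ, walsh n x ∂μ := by
        rw [MeasureTheory.setIntegral_univ]
    _ = ∫ x in ⋃ z, C z, walsh n x ∂μ := by rw [hunion]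
    _ = ∑' z, ∫ x in C z, walsh n x ∂μ :=
        MeasureTheory.integral_iUnion hmeas hdisj ((walsh_integrable hμ n).integrableOn)
    _ = ∑ z, ∫ x in C z, walsh n x ∂μ := tsum_fintype _
    _ = ∑ z, walsh n (ext z) * (1/2 : ℝ) ^ M := by
        apply Finset.sum_congr rfl
        intro z _
        rw [MeasureTheory.setIntegral_congr_fun (hmeas z) (hconst z),
          MeasureTheory.setIntegral_const, MeasureTheory.measureReal_def, hμC z, smul_eq_mul, mul_comm]
    _ = (∑ z, walsh n (ext z)) * (1/2 : ℝ) ^ M := by rw [← Finset.sum_mul]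
    _ = 0 := by
        rw [mul_eq_zero]
        left
        set t := Nat.log 2 n with hT
        have ht : n.testBit t = true := testBit_log_self hn
        have htM : t < M := by
          have h1 : 2 ^ t ≤ n := Nat.pow_log_le_self 2 hn
          have h2 : t < 2 ^ t := Nat.lt_two_pow_self (n := t)
          omega
        apply Finset.sum_involution
          (g := fun z _ => Function.update z ⟨t, htM⟩ (z ⟨t, htM⟩ + 1))
        · intro z _
          have hext_up : ext (Function.update z ⟨t, htM⟩ (z ⟨t, htM⟩ + 1))
              = Function.update (ext z) t (ext z t + 1) := by
            funext k
            by_cases hk : k < M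
            · by_cases hkt : k = t
              · subst hkt
                simp [hext, hk, Function.update_self]
              · rw [Function.update_of_ne hkt]
                have hne : (⟨k, hk⟩ : Fin M) ≠ ⟨t, htM⟩ := by
                  simp [Fin.ext_iff]; omega
                simp [hext, hk, Function.update_of_ne hne]
            · rw [Function.update_of_ne (by omega)]
              simp [hext, hk]
          rw [hext_up, walsh_flip t ht]
          ring
        · intro z _ _
          intro hcontra
          have heq := congrFun hcontra ⟨t, htM⟩
          rw [Function.update_self] at heq
          have hzm : ∀ a : ZMod 2, a + 1 ≠ a := by decide
          exact hzm _ heq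
        · intro z _
          funext k
          by_cases hkt : k = (⟨t, htM⟩ : Fin M)
          · subst hkt
            rw [Function.update_self, Function.update_self]
            have hzm : ∀ a : ZMod 2, a + 1 + 1 = a := by decide
            exact hzm _
          · rw [Function.update_of_ne hkt, Function.update_of_ne hkt]
        · intro z _; exact Finset.mem_univ _

lemma integral_walsh_mul (a b : ℕ) :
    ∫ x, walsh a x * walsh b x ∂μ = if a = b then 1 else 0 := by
  haveI := haar_prob hμ
  simp_rw [walsh_mul]
  rcases eq_or_ne a b with rfl | hab
  · rw [if_pos rfl, Nat.xor_self]
    simp_rw [walsh_zero]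
    simp
  · rw [if_neg hab]
    apply integral_walsh hμ
    rw [Ne, nat_xor_eq_zero]
    exact hab

end Haar
end

noncomputable section

lemma kacz_eq_walsh (i : ℕ) (x : WG) : kacz i x = walsh (piIdx i) x := by
  rcases eq_or_ne i 0 with rfl | hi
  · rw [kacz, if_pos rfl, piIdx_zero, walsh_zero]
  · rw [kacz, if_neg hi]
    have hblock := piIdx_mem_block hi
    rw [walsh_eq_pow (piIdx i) (Nat.log 2 i + 1) hblock.2 x, Finset.sum_range_succ]
    have hbit_s : (piIdx i).testBit (Nat.log 2 i) = true := by
      rw [piIdx_testBit hi, if_pos rfl]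
    rw [hbit_s, if_pos rfl]
    have hB : (∑ k ∈ Finset.range (Nat.log 2 i),
        if (piIdx i).testBit k then (x k).val else 0)
        = ∑ k ∈ Finset.range (Nat.log 2 i),
            if i.testBit (Nat.log 2 i - 1 - k) then (x k).val else 0 := by
      apply Finset.sum_congr rfl
      intro k hk
      rw [Finset.mem_range] at hk
      have hb : (piIdx i).testBit k = i.testBit (Nat.log 2 i - 1 - k) := by
        rw [piIdx_testBit hi, if_neg (by omega), if_pos hk]
      rw [hb]
    rw [hB]
    have hA : (∑ k ∈ Finset.range (Nat.log 2 i),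
        if i.testBit (Nat.log 2 i - 1 - k) then (x k).val else 0)
        = ∑ k ∈ Finset.range (Nat.log 2 i),
            if i.testBit k then (x (Nat.log 2 i - 1 - k)).val else 0 := by
      apply Finset.sum_nbij' (fun k => Nat.log 2 i - 1 - k) (fun k => Nat.log 2 i - 1 - k)
      · intro a ha; rw [Finset.mem_range] at *; omega
      · intro a ha; rw [Finset.mem_range] at *; omega
      · intro a ha; rw [Finset.mem_range] at ha; omega
      · intro a ha; rw [Finset.mem_range] at ha; omega
      · intro a ha
        rw [Finset.mem_range] at ha
        have : Nat.log 2 i - 1 - (Nat.log 2 i - 1 - a) = a := by omega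
        rw [this]
    rw [hA, rad, pow_add]
    ring

lemma fhatK_eq (μ : Measure WG) (h : WG → ℝ) (i : ℕ) :
    fhatK μ h i = fhatW μ h (piIdx i) := by
  rw [fhatK, fhatW]
  simp_rw [kacz_eq_walsh]

lemma integrable_mul_walsh {μ : Measure WG} {h : WG → ℝ} (hh : Integrable h μ) (j : ℕ) :
    Integrable (fun x => h x * walsh j x) μ := by
  have h1 : Integrable (fun x => walsh j x * h x) μ :=
    hh.bdd_mul (walsh_measurable j).aestronglyMeasurable
      (c := 1) (Filter.Eventually.of_forall fun x => by rw [walsh]; simp)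
  exact h1.congr (Filter.Eventually.of_forall fun x => mul_comm _ _)

lemma swap_sum (n : ℕ) (T : ℕ → ℝ) :
    ∑ j ∈ Finset.Icc 1 n, ∑ i ∈ Finset.range j, T i
      = ∑ i ∈ Finset.range n, ((n - i : ℕ) : ℝ) * T i := by
  induction n with
  | zero => simp
  | succ n ih =>
    rw [Finset.sum_Icc_succ_top (by omega), ih,
      Finset.sum_range_succ (fun i => ((n + 1 - i : ℕ) : ℝ) * T i) n,
      Finset.sum_range_succ T n]
    have h1 : ∑ i ∈ Finset.range n, ((n + 1 - i : ℕ) : ℝ) * T i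
        = ∑ i ∈ Finset.range n, (((n - i : ℕ) : ℝ) * T i + T i) := by
      apply Finset.sum_congr rfl
      intro i hi
      rw [Finset.mem_range] at hi
      have : (n + 1 - i : ℕ) = (n - i) + 1 := by omega
      rw [this]
      push_cast
      ring
    rw [h1, Finset.sum_add_distrib]
    have h2 : ((n + 1 - n : ℕ) : ℝ) = 1 := by norm_num
    rw [h2]
    ring

lemma sigma_swap (μ : Measure WG) (n : ℕ) (f : WG → ℝ) (y : WG) :
    sigmaK μ n f y
      = (1 / n : ℝ) * ∑ i ∈ Finset.range n, ((n - i : ℕ) : ℝ) * (fhatK μ f i * kacz i y) := by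
  rw [sigmaK]
  congr 1
  rw [← swap_sum]
  apply Finset.sum_congr rfl
  intro j _
  rw [partialK]

section Haar2
variable {μ : Measure WG} (hμ : IsHaar μ)
include hμ

lemma integral_walsh_full (k : ℕ) : ∫ x, walsh k x ∂μ = if k = 0 then 1 else 0 := by
  haveI := haar_prob hμ
  rcases eq_or_ne k 0 with rfl | hk
  · simp_rw [walsh_zero]
    simp
  · rw [if_neg hk]
    exact integral_walsh hμ hk

lemma fhatW_partialW (N j : ℕ) (f : WG → ℝ) :
    fhatW μ (partialW μ N f) j = if j < N then fhatW μ f j else 0 := by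
  rw [fhatW]
  simp only [partialW]
  simp_rw [Finset.sum_mul, mul_assoc, walsh_mul]
  rw [MeasureTheory.integral_finset_sum _
    (fun l _ => ((walsh_integrable hμ (l ^^^ j)).const_mul _))]
  simp_rw [MeasureTheory.integral_const_mul, integral_walsh_full hμ, nat_xor_eq_zero,
    mul_ite, mul_one, mul_zero]
  rw [Finset.sum_ite_eq' (Finset.range N) j]
  simp only [Finset.mem_range]

end Haar2
end

noncomputable section

/-- For `2^m < n ≤ 2^{m+1}`:
`σ_n^κ(S_{2^m}f) − S_{2^m}f = (2^m/n)·S_{2^m}(σ_{2^m}f − f)`. -/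
theorem fejer_partial_sum_identity (μ : Measure WG) (hμ : IsHaar μ) (m n : ℕ)
    (h1 : 2 ^ m < n) (h2 : n ≤ 2 ^ (m + 1)) (f : WG → ℝ) (hf : Integrable f μ) (x : WG) :
    sigmaK μ n (partialW μ (2 ^ m) f) x - partialW μ (2 ^ m) f x =
      ((2 ^ m : ℝ) / n) *
        partialW μ (2 ^ m) (fun y => sigmaK μ (2 ^ m) f y - f y) x := by
  set N := 2 ^ m with hNdef
  have hNpos : 0 < N := Nat.pow_pos (by norm_num)
  have hnpos : 0 < n := lt_trans hNpos h1
  have hnR : (0:ℝ) < (n:ℝ) := by exact_mod_cast hnpos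
  have hNR : (0:ℝ) < (N:ℝ) := by exact_mod_cast hNpos
  -- LHS Fejér mean of the partial sum
  have hLHS : sigmaK μ n (partialW μ N f) x
      = (1 / n : ℝ) * ∑ l ∈ Finset.range N,
          ((n - piIdx l : ℕ) : ℝ) * (fhatW μ f l * walsh l x) := by
    rw [sigma_swap]
    congr 1
    have hterm : ∀ i, fhatK μ (partialW μ N f) i * kacz i x
        = (if piIdx i < N then fhatW μ f (piIdx i) else 0) * walsh (piIdx i) x := by
      intro i
      rw [fhatK_eq, fhatW_partialW hμ, kacz_eq_walsh]
    calc ∑ i ∈ Finset.range n, ((n - i : ℕ) : ℝ) * (fhatK μ (partialW μ N f) i * kacz i x)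
        = ∑ i ∈ Finset.range n, ((n - i : ℕ) : ℝ) *
            ((if piIdx i < N then fhatW μ f (piIdx i) else 0) * walsh (piIdx i) x) := by
          apply Finset.sum_congr rfl
          intro i _
          rw [hterm i]
      _ = ∑ i ∈ Finset.range N, ((n - i : ℕ) : ℝ) *
            ((if piIdx i < N then fhatW μ f (piIdx i) else 0) * walsh (piIdx i) x) := by
          rw [Finset.range_eq_Ico, ← Finset.sum_Ico_consecutive _ (Nat.zero_le N) h1.le]
          have hz : ∑ i ∈ Finset.Ico N n, ((n - i : ℕ) : ℝ) *
              ((if piIdx i < N then fhatW μ f (piIdx i) else 0) * walsh (piIdx i) x) = 0 := by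
            apply Finset.sum_eq_zero
            intro i hi
            rw [Finset.mem_Ico] at hi
            rw [if_neg (not_lt.2 (le_piIdx_of_le hi.1))]
            ring
          rw [hz, add_zero, Finset.range_eq_Ico]
      _ = ∑ i ∈ Finset.range N, ((n - i : ℕ) : ℝ) * (fhatW μ f (piIdx i) * walsh (piIdx i) x) := by
          apply Finset.sum_congr rfl
          intro i hi
          rw [Finset.mem_range] at hi
          rw [if_pos (piIdx_lt_pow hi)]
      _ = ∑ l ∈ Finset.range N, ((n - piIdx l : ℕ) : ℝ) * (fhatW μ f l * walsh l x) := by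
          rw [← sum_piIdx m (fun l => ((n - piIdx l : ℕ) : ℝ) * (fhatW μ f l * walsh l x))]
          apply Finset.sum_congr rfl
          intro i _
          rw [piIdx_piIdx]
  -- the Fejér mean at the dyadic index, pointwise
  have hsig : ∀ y, sigmaK μ N f y
      = (1 / N : ℝ) * ∑ i ∈ Finset.range N,
          (((N - i : ℕ) : ℝ) * fhatW μ f (piIdx i)) * walsh (piIdx i) y := by
    intro y
    rw [sigma_swap]
    congr 1
    apply Finset.sum_congr rfl
    intro i _
    rw [fhatK_eq, kacz_eq_walsh, mul_assoc]
  have hσint : Integrable (sigmaK μ N f) μ := by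
    have heq : sigmaK μ N f = fun y => (1 / N : ℝ) * ∑ i ∈ Finset.range N,
        (((N - i : ℕ) : ℝ) * fhatW μ f (piIdx i)) * walsh (piIdx i) y := funext hsig
    rw [heq]
    apply Integrable.const_mul
    apply MeasureTheory.integrable_finset_sum
    intro i _
    exact (walsh_integrable hμ (piIdx i)).const_mul _
  -- Fourier coefficients of `σ_N f − f`
  have hcoef : ∀ l ∈ Finset.range N, fhatW μ (fun y => sigmaK μ N f y - f y) l
      = (1 / N : ℝ) * (((N - piIdx l : ℕ) : ℝ) * fhatW μ f l) - fhatW μ f l := by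
    intro l hl
    have hlN : l < N := Finset.mem_range.1 hl
    rw [fhatW]
    simp_rw [sub_mul]
    rw [MeasureTheory.integral_sub (integrable_mul_walsh hσint l) (integrable_mul_walsh hf l)]
    have e1 : ∫ y, sigmaK μ N f y * walsh l y ∂μ
        = (1 / N : ℝ) * (((N - piIdx l : ℕ) : ℝ) * fhatW μ f l) := by
      calc ∫ y, sigmaK μ N f y * walsh l y ∂μ
          = ∫ y, ∑ i ∈ Finset.range N, (1 / N : ℝ) *
              ((((N - i : ℕ) : ℝ) * fhatW μ f (piIdx i)) * walsh (piIdx i ^^^ l) y) ∂μ := by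
            congr 1
            funext y
            rw [hsig y, mul_assoc, Finset.sum_mul, Finset.mul_sum]
            apply Finset.sum_congr rfl
            intro i _
            rw [mul_assoc, walsh_mul]
        _ = ∑ i ∈ Finset.range N, (1 / N : ℝ) *
              ((((N - i : ℕ) : ℝ) * fhatW μ f (piIdx i)) * ∫ y, walsh (piIdx i ^^^ l) y ∂μ) := by
            rw [MeasureTheory.integral_finset_sum _
              (fun i _ => (((walsh_integrable hμ (piIdx i ^^^ l)).const_mul _).const_mul _))]
            simp_rw [MeasureTheory.integral_const_mul]
        _ = ∑ i ∈ Finset.range N, (1 / N : ℝ) *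
              ((((N - i : ℕ) : ℝ) * fhatW μ f (piIdx i)) * (if piIdx i = l then 1 else 0)) := by
            apply Finset.sum_congr rfl
            intro i _
            rw [integral_walsh_full hμ]
            simp only [nat_xor_eq_zero]
        _ = (1 / N : ℝ) * ∑ i ∈ Finset.range N,
              ((((N - i : ℕ) : ℝ) * fhatW μ f (piIdx i)) * (if piIdx i = l then 1 else 0)) := by
            rw [Finset.mul_sum]
        _ = (1 / N : ℝ) * (((N - piIdx l : ℕ) : ℝ) * fhatW μ f l) := by
            congr 1
            calc ∑ i ∈ Finset.range N,
                  ((((N - i : ℕ) : ℝ) * fhatW μ f (piIdx i)) * (if piIdx i = l then 1 else 0))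
                = ∑ i ∈ Finset.range N,
                  ((((N - piIdx (piIdx i) : ℕ) : ℝ) * fhatW μ f (piIdx i)) *
                    (if piIdx i = l then 1 else 0)) := by
                  apply Finset.sum_congr rfl
                  intro i _
                  rw [piIdx_piIdx]
              _ = ∑ j ∈ Finset.range N,
                  ((((N - piIdx j : ℕ) : ℝ) * fhatW μ f j) * (if j = l then 1 else 0)) :=
                  sum_piIdx m (fun j => (((N - piIdx j : ℕ) : ℝ) * fhatW μ f j) *
                    (if j = l then 1 else 0))
              _ = ((N - piIdx l : ℕ) : ℝ) * fhatW μ f l := by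
                  simp_rw [mul_ite, mul_one, mul_zero]
                  rw [Finset.sum_ite_eq' (Finset.range N) l]
                  rw [if_pos (Finset.mem_range.2 hlN)]
    rw [e1]
    rfl
  -- assemble
  have hRHS : partialW μ N (fun y => sigmaK μ N f y - f y) x
      = ∑ l ∈ Finset.range N,
          ((1 / N : ℝ) * (((N - piIdx l : ℕ) : ℝ) * fhatW μ f l) - fhatW μ f l) * walsh l x := by
    rw [partialW]
    apply Finset.sum_congr rfl
    intro l hl
    rw [hcoef l hl]
  rw [hLHS, hRHS, partialW, Finset.mul_sum, Finset.mul_sum, ← Finset.sum_sub_distrib]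
  apply Finset.sum_congr rfl
  intro l hl
  have hp : piIdx l < N := piIdx_lt_pow (Finset.mem_range.1 hl)
  have hc1 : ((n - piIdx l : ℕ) : ℝ) = (n : ℝ) - (piIdx l : ℝ) := by
    rw [Nat.cast_sub (by omega)]
  have hc2 : ((N - piIdx l : ℕ) : ℝ) = (N : ℝ) - (piIdx l : ℝ) := by
    rw [Nat.cast_sub hp.le]
  have hcN : ((N : ℕ) : ℝ) = (2 : ℝ) ^ m := by
    rw [hNdef]
    push_cast
    ring
  rw [hc1, hc2, ← hcN]
  have hn0 : (n : ℝ) ≠ 0 := ne_of_gt hnR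
  have hN0 : ((N : ℕ) : ℝ) ≠ 0 := ne_of_gt hNR
  field_simp
  ring

end
end

section
/- Let q_A = ∑_{j=0}^{A} 4^j. Then for i ≥ 3, ∫_G |q_{A-1} K_{q_{A-1}}^w(τ_{2A}(x))|^{1/2} dμ(x) ≥ c·A for an absolute constant c > 0, where A = 2^{i-1} — equivalently, ∫_G (n |K_n^w|)^{1/2} dμ along the sequence n = q_{A-1} grows at least linearly in A. -/
open MeasureTheory Filter Finset
open scoped ENNReal NNReal

noncomputable section

namespace FejerLB

open Finset

noncomputable def SS (n : ℕ) (y : WG) : ℝ := ∑ i ∈ range n, ((n : ℝ) - (i : ℝ)) * walsh i y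

noncomputable def DP (t : ℕ) (y : WG) : ℝ := ∑ i ∈ range (2 ^ t), walsh i y

lemma walsh_zero (y : WG) : walsh 0 y = 1 := by simp [walsh]

lemma walsh_ext {n M : ℕ} (h : n < M) (y : WG) :
    walsh n y = (-1 : ℝ) ^ (∑ k ∈ range M, if n.testBit k then (y k).val else 0) := by
  unfold walsh
  congr 1
  refine Finset.sum_subset (Finset.range_subset_range.2 h) ?_
  intro k _ hk
  simp only [mem_range, not_lt] at hk
  have hnk : n < 2 ^ k := lt_trans (by omega) (Nat.lt_two_pow_self (n := k))
  simp [Nat.testBit_lt_two_pow hnk]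

lemma abs_walsh (n : ℕ) (y : WG) : |walsh n y| = 1 := by
  unfold walsh
  rw [abs_pow, abs_neg, abs_one, one_pow]

lemma testBit_pow_add {t i : ℕ} (h : i < 2 ^ t) (k : ℕ) :
    (2 ^ t + i).testBit k = if k = t then true else i.testBit k := by
  have h0 := Nat.testBit_two_pow_mul_add 1 h k
  rw [Nat.mul_one] at h0
  rw [h0]
  by_cases hkt : k < t
  · rw [if_pos hkt, if_neg (by omega)]
  · rw [if_neg hkt]
    by_cases hke : k = t
    · subst hke
      simp
    · have hkk : t < k := by omega
      have h1 : Nat.testBit 1 (k - t) = false := by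
        have : (1 : ℕ) < 2 ^ (k - t) := by
          have : 0 < k - t := by omega
          calc (1:ℕ) < 2 ^ 1 := by norm_num
          _ ≤ 2 ^ (k - t) := Nat.pow_le_pow_right (by norm_num) (by omega)
        exact Nat.testBit_lt_two_pow this
      have h2 : i.testBit k = false := by
        refine Nat.testBit_lt_two_pow ?_
        calc i < 2 ^ t := h
        _ ≤ 2 ^ k := Nat.pow_le_pow_right (by norm_num) (by omega)
      rw [h1, h2, if_neg hke]

lemma walsh_pow_add {t i : ℕ} (h : i < 2 ^ t) (y : WG) :
    walsh (2 ^ t + i) y = (-1 : ℝ) ^ (y t).val * walsh i y := by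
  have hM : 2 ^ t + i < 2 ^ t + i + 1 := Nat.lt_succ_self _
  have hiM : i < 2 ^ t + i + 1 := by omega
  have htM : t < 2 ^ t + i + 1 := by have := Nat.lt_two_pow_self (n := t); omega
  rw [walsh_ext hM y, walsh_ext hiM y, ← pow_add]
  congr 1
  have hit : i.testBit t = false := Nat.testBit_lt_two_pow h
  have hterm : ∀ k, (if (2 ^ t + i).testBit k then (y k).val else 0)
      = (if k = t then (y t).val else 0) + (if i.testBit k then (y k).val else 0) := by
    intro k
    rw [testBit_pow_add h k]
    by_cases hke : k = t
    · subst hke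
      simp [hit]
    · simp [hke]
  rw [Finset.sum_congr rfl (fun k _ => hterm k), Finset.sum_add_distrib]
  congr 1
  simp [Finset.sum_ite_eq', htM]

lemma SS_split {t r : ℕ} (h : r ≤ 2 ^ t) (y : WG) :
    SS (2 ^ t + r) y
      = (r : ℝ) * DP t y + SS (2 ^ t) y + (-1 : ℝ) ^ (y t).val * SS r y := by
  unfold SS DP
  rw [Finset.sum_range_add]
  have h1 : ∀ i ∈ range (2 ^ t),
      (((2 ^ t + r : ℕ) : ℝ) - (i : ℝ)) * walsh i y
        = (r : ℝ) * walsh i y + (((2 ^ t : ℕ) : ℝ) - (i : ℝ)) * walsh i y := by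
    intro i _
    push_cast
    ring
  have h2 : ∀ j ∈ range r,
      (((2 ^ t + r : ℕ) : ℝ) - ((2 ^ t + j : ℕ) : ℝ)) * walsh (2 ^ t + j) y
        = (-1 : ℝ) ^ (y t).val * (((r : ℕ) : ℝ) - (j : ℝ)) * walsh j y := by
    intro j hj
    rw [walsh_pow_add (lt_of_lt_of_le (Finset.mem_range.1 hj) h) y]
    push_cast
    ring
  rw [Finset.sum_congr rfl h1, Finset.sum_add_distrib, Finset.sum_congr rfl h2]
  simp only [Finset.mul_sum]
  congr 1
  exact Finset.sum_congr rfl fun j _ => by ring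

lemma DP_zero (y : WG) : DP 0 y = 1 := by simp [DP, walsh]

lemma SS_one (y : WG) : SS 1 y = 1 := by simp [SS, walsh]

lemma DP_succ (t : ℕ) (y : WG) :
    DP (t + 1) y = (1 + (-1 : ℝ) ^ (y t).val) * DP t y := by
  have h : (2:ℕ) ^ (t+1) = 2 ^ t + 2 ^ t := by ring
  unfold DP
  rw [h, Finset.sum_range_add]
  rw [Finset.sum_congr rfl (fun j hj => walsh_pow_add (Finset.mem_range.1 hj) y),
    ← Finset.mul_sum]
  ring

lemma SS_pow_succ (t : ℕ) (y : WG) :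
    SS (2 ^ (t + 1)) y
      = (2 ^ t : ℝ) * DP t y + (1 + (-1 : ℝ) ^ (y t).val) * SS (2 ^ t) y := by
  have h : (2:ℕ) ^ (t+1) = 2 ^ t + 2 ^ t := by ring
  rw [h, SS_split le_rfl y]
  push_cast
  ring

lemma SS_pow_zero (y : WG) : SS (2 ^ 0) y = 1 := by
  rw [pow_zero, SS_one]

lemma DP_eq_zero {t k : ℕ} {y : WG} (hk : k < t) (h1 : y k = 1) : DP t y = 0 := by
  induction t with
  | zero => omega
  | succ t ih =>
    rw [DP_succ]
    by_cases hkt : k = t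
    · subst hkt
      rw [h1]
      norm_num [ZMod.val_one]
    · rw [ih (by omega)]
      ring

lemma DP_eq_pow {t : ℕ} {y : WG} (h0 : ∀ k, k < t → y k = 0) : DP t y = 2 ^ t := by
  induction t with
  | zero => simp [DP_zero]
  | succ t ih =>
    rw [DP_succ, h0 t (by omega), ih (fun k hk => h0 k (by omega))]
    norm_num [ZMod.val_zero]
    ring

lemma SS_pow_all_zero {t : ℕ} {y : WG} (h0 : ∀ k, k < t → y k = 0) :
    SS (2 ^ t) y = ((4 : ℝ) ^ t + 2 ^ t) / 2 := by
  induction t with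
  | zero => rw [SS_pow_zero]; norm_num
  | succ t ih =>
    rw [SS_pow_succ, h0 t (by omega), ih (fun k hk => h0 k (by omega)),
      DP_eq_pow (fun k hk => h0 k (by omega))]
    have h4 : (4:ℝ) ^ t = 2 ^ t * 2 ^ t := by
      rw [← mul_pow]; norm_num
    have hv : (-1:ℝ) ^ ((0:ZMod 2)).val = 1 := by norm_num [ZMod.val_zero]
    rw [hv, pow_succ (4:ℝ) t, pow_succ (2:ℝ) t, h4]
    ring

lemma qq_zero : qq 0 = 1 := by simp [qq]

lemma qq_succ (B : ℕ) : qq (B + 1) = 2 ^ (2 * (B + 1)) + qq B := by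
  have h : (2:ℕ) ^ (2 * (B + 1)) = 4 ^ (B + 1) := by
    rw [pow_mul]; norm_num
  rw [h]
  unfold qq
  rw [Finset.sum_range_succ]
  ring

lemma three_qq (B : ℕ) : 3 * qq B + 1 = 4 ^ (B + 1) := by
  induction B with
  | zero => simp [qq_zero]
  | succ B ih =>
    rw [qq_succ]
    have h : (2:ℕ) ^ (2 * (B + 1)) = 4 ^ (B + 1) := by rw [pow_mul]; norm_num
    rw [h]
    rw [pow_succ 4 (B+1)]
    omega

lemma qq_pos (B : ℕ) : 0 < qq B := by
  have := three_qq B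
  omega

lemma qq_lt (B : ℕ) : qq B ≤ 2 ^ (2 * (B + 1)) := by
  have h1 := three_qq B
  have h : (2:ℕ) ^ (2 * (B + 1)) = 4 ^ (B + 1) := by rw [pow_mul]; norm_num
  omega

lemma qq_real (B : ℕ) : (qq B : ℝ) = ((4 : ℝ) ^ (B + 1) - 1) / 3 := by
  have h := three_qq B
  have h2 : ((3 * qq B + 1 : ℕ) : ℝ) = ((4 ^ (B + 1) : ℕ) : ℝ) := by rw [h]
  push_cast at h2
  linarith

lemma SS_qq_succ (B : ℕ) (y : WG) :
    SS (qq (B + 1)) y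
      = (qq B : ℝ) * DP (2 * (B + 1)) y + SS (2 ^ (2 * (B + 1))) y
        + (-1 : ℝ) ^ (y (2 * (B + 1))).val * SS (qq B) y := by
  rw [qq_succ]
  exact SS_split (qq_lt B) y

lemma SS_qq_zero (y : WG) : SS (qq 0) y = 1 := by rw [qq_zero, SS_one]

lemma pow16 (c : ℕ) : (16 : ℝ) ^ c = 4 ^ c * 4 ^ c := by
  rw [← mul_pow]; norm_num

lemma pow4 (c : ℕ) : (4 : ℝ) ^ c = 2 ^ c * 2 ^ c := by
  rw [← mul_pow]; norm_num

lemma pow_2_2c (c : ℕ) : (2 : ℝ) ^ (2 * c) = 4 ^ c := by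
  rw [pow_mul]; norm_num

lemma pow_4_2c (c : ℕ) : (4 : ℝ) ^ (2 * c) = 16 ^ c := by
  rw [pow_mul]; norm_num

lemma neg_one_val_zero {y : WG} {t : ℕ} (h : y t = 0) : (-1 : ℝ) ^ (y t).val = 1 := by
  rw [h]; norm_num [ZMod.val_zero]

lemma neg_one_val_one {y : WG} {t : ℕ} (h : y t = 1) : (-1 : ℝ) ^ (y t).val = -1 := by
  rw [h]; norm_num [ZMod.val_one]

/-- Bounds for the all-zero-prefix region. -/
lemma SS_qq_all_zero {y : WG} : ∀ c : ℕ, (∀ k, k ≤ 2 * c → y k = 0) →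
    1 ≤ SS (qq c) y ∧ SS (qq c) y ≤ 2 * (16 : ℝ) ^ c := by
  intro c
  induction c with
  | zero =>
    intro _
    rw [SS_qq_zero]
    norm_num
  | succ c ih =>
    intro h0
    obtain ⟨ih1, ih2⟩ := ih (fun k hk => h0 k (by omega))
    rw [SS_qq_succ]
    have hDP : DP (2 * (c + 1)) y = 2 ^ (2 * (c + 1)) :=
      DP_eq_pow (fun k hk => h0 k (by omega))
    have hSSp : SS (2 ^ (2 * (c + 1))) y = ((4 : ℝ) ^ (2 * (c + 1)) + 2 ^ (2 * (c + 1))) / 2 :=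
      SS_pow_all_zero (fun k hk => h0 k (by omega))
    have hval : (-1 : ℝ) ^ (y (2 * (c + 1))).val = 1 := neg_one_val_zero (h0 _ le_rfl)
    rw [hDP, hSSp, hval, one_mul]
    have e1 : (2 : ℝ) ^ (2 * (c + 1)) = 4 ^ (c + 1) := pow_2_2c (c + 1)
    have e2 : (4 : ℝ) ^ (2 * (c + 1)) = 16 ^ (c + 1) := pow_4_2c (c + 1)
    have e3 : (16 : ℝ) ^ (c + 1) = 4 ^ (c + 1) * 4 ^ (c + 1) := pow16 (c + 1)
    have e4 : (16 : ℝ) ^ (c + 1) = 16 * 16 ^ c := by rw [pow_succ]; ring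
    have e5 : (4 : ℝ) ^ (c + 1) ≤ 16 ^ (c + 1) := by
      apply pow_le_pow_left₀ (by norm_num) (by norm_num)
    have hq : (qq c : ℝ) = ((4 : ℝ) ^ (c + 1) - 1) / 3 := qq_real c
    have hq4 : (0:ℝ) < 4 ^ (c + 1) := by positivity
    constructor
    · have t1 : (0:ℝ) ≤ (qq c : ℝ) * 2 ^ (2 * (c + 1)) := by positivity
      have t2 : (0:ℝ) ≤ ((4 : ℝ) ^ (2 * (c + 1)) + 2 ^ (2 * (c + 1))) / 2 := by positivity
      linarith
    · rw [e1, e2, hq]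
      nlinarith [e3, e4, e5, hq4, ih2]

section Pattern

variable {y : WG} {m : ℕ}
  (hy : ∀ t, t ≤ 2 * m + 2 → y t = if t = 2 * m ∨ t = 2 * m + 2 then 1 else 0)

include hy

lemma hy_zero {t : ℕ} (h1 : t ≤ 2 * m + 2) (h2 : t ≠ 2 * m) (h3 : t ≠ 2 * m + 2) :
    y t = 0 := by
  rw [hy t h1, if_neg]
  tauto

lemma hy_low {t : ℕ} (h1 : t < 2 * m) : y t = 0 := hy_zero hy (by omega) (by omega) (by omega)

lemma hy_m : y (2 * m) = 1 := by rw [hy _ (by omega), if_pos (Or.inl rfl)]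

lemma hy_m2 : y (2 * m + 2) = 1 := by rw [hy _ (by omega), if_pos (Or.inr rfl)]

lemma hy_m1 : y (2 * m + 1) = 0 := hy_zero hy (by omega) (by omega) (by omega)

/-- `DP t y = 0` once `t` passes the one at `2m`. -/
lemma DP_high {t : ℕ} (h : 2 * m < t) : DP t y = 0 := DP_eq_zero h (hy_m hy)

lemma SS_pow_2m1 : SS (2 ^ (2 * m + 1)) y = (16 : ℝ) ^ m := by
  rw [SS_pow_succ, neg_one_val_one (hy_m hy), DP_eq_pow (fun k hk => hy_low hy hk),
    SS_pow_all_zero (fun k hk => hy_low hy hk)]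
  rw [pow16, pow4, pow_2_2c]
  ring

lemma SS_pow_2m2 : SS (2 ^ (2 * m + 2)) y = 2 * (16 : ℝ) ^ m := by
  have h : 2 * m + 2 = (2 * m + 1) + 1 := rfl
  rw [h, SS_pow_succ, neg_one_val_zero (hy_m1 hy), DP_high hy (by omega), SS_pow_2m1 hy]
  ring

lemma SS_pow_high : ∀ t, 2 * m + 3 ≤ t → SS (2 ^ t) y = 0 := by
  intro t
  induction t with
  | zero => omega
  | succ t ih =>
    intro ht
    by_cases hbase : t = 2 * m + 2
    · subst hbase
      rw [SS_pow_succ, neg_one_val_one (hy_m2 hy), DP_high hy (by omega), SS_pow_2m2 hy]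
      ring
    · rw [SS_pow_succ, DP_high hy (by omega), ih (by omega)]
      ring

/-- `0 ≤ SS (qq m) y ≤ 16 ^ m` on the pattern set. -/
lemma SS_qq_m : 0 ≤ SS (qq m) y ∧ SS (qq m) y ≤ (16 : ℝ) ^ m := by
  cases m with
  | zero =>
    rw [SS_qq_zero]
    norm_num
  | succ c =>
    have hz : ∀ k, k ≤ 2 * c → y k = 0 := fun k hk => hy_low hy (by omega)
    obtain ⟨h1, h2⟩ := SS_qq_all_zero c hz
    have hm : 2 * (c + 1) = 2 * (c + 1) := rfl
    rw [SS_qq_succ, neg_one_val_one (hy_m hy), DP_eq_pow (fun k hk => hy_low hy hk),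
      SS_pow_all_zero (fun k hk => hy_low hy hk)]
    have e1 : (2 : ℝ) ^ (2 * (c + 1)) = 4 ^ (c + 1) := pow_2_2c (c + 1)
    have e2 : (4 : ℝ) ^ (2 * (c + 1)) = 16 ^ (c + 1) := pow_4_2c (c + 1)
    have e3 : (16 : ℝ) ^ (c + 1) = 4 ^ (c + 1) * 4 ^ (c + 1) := pow16 (c + 1)
    have e4 : (16 : ℝ) ^ (c + 1) = 16 * 16 ^ c := by rw [pow_succ]; ring
    have e5 : (4 : ℝ) ^ (c + 1) ≤ 16 ^ (c + 1) := by
      apply pow_le_pow_left₀ (by norm_num) (by norm_num)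
    have hq : (qq c : ℝ) = ((4 : ℝ) ^ (c + 1) - 1) / 3 := qq_real c
    have hq4 : (0:ℝ) < 4 ^ (c + 1) := by positivity
    rw [e1, e2, hq]
    constructor
    · nlinarith
    · nlinarith

/-- The main value: `16^m ≤ SS (qq (m+1)) y ≤ 2·16^m`. -/
lemma SS_qq_m1 : (16 : ℝ) ^ m ≤ SS (qq (m + 1)) y ∧ SS (qq (m + 1)) y ≤ 2 * (16 : ℝ) ^ m := by
  obtain ⟨h1, h2⟩ := SS_qq_m hy
  have hh : 2 * (m + 1) = 2 * m + 2 := by ring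
  rw [SS_qq_succ, hh, neg_one_val_one (hy_m2 hy), DP_high hy (by omega), SS_pow_2m2 hy]
  constructor <;> nlinarith

lemma SS_qq_big : ∀ B, m + 1 ≤ B → (16 : ℝ) ^ m ≤ |SS (qq B) y| := by
  intro B
  induction B with
  | zero => omega
  | succ B ih =>
    intro hB
    by_cases hbase : B = m
    · subst hbase
      obtain ⟨h1, _⟩ := SS_qq_m1 hy
      exact le_trans h1 (le_abs_self _)
    · have hB' : m + 1 ≤ B := by omega
      rw [SS_qq_succ, DP_high hy (by omega), SS_pow_high hy (2 * (B + 1)) (by omega)]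
      have h0 : (qq B : ℝ) * 0 + 0 + (-1 : ℝ) ^ (y (2 * (B + 1))).val * SS (qq B) y
          = (-1 : ℝ) ^ (y (2 * (B + 1))).val * SS (qq B) y := by ring
      rw [h0, abs_mul, abs_pow, abs_neg, abs_one, one_pow, one_mul]
      exact ih hB'

end Pattern

lemma SS_zero (y : WG) : SS 0 y = 0 := by simp [SS]

lemma SS_succ (n : ℕ) (y : WG) : SS (n + 1) y = SS n y + Dw (n + 1) y := by
  unfold SS Dw
  rw [Finset.sum_range_succ, Finset.sum_range_succ (f := fun i => walsh i y)]
  have h : ∀ i ∈ range n, (((n + 1 : ℕ) : ℝ) - (i : ℝ)) * walsh i y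
      = ((n : ℝ) - (i : ℝ)) * walsh i y + walsh i y := by
    intro i _
    push_cast
    ring
  rw [Finset.sum_congr rfl h, Finset.sum_add_distrib]
  push_cast
  ring

lemma sum_Icc_Dw (n : ℕ) (y : WG) : ∑ k ∈ Finset.Icc 1 n, Dw k y = SS n y := by
  induction n with
  | zero => simp [SS_zero]
  | succ n ih =>
    rw [Finset.sum_Icc_succ_top (by omega) (fun k => Dw k y), ih, SS_succ]

lemma q_mul_Kw {n : ℕ} (hn : 0 < n) (y : WG) : (n : ℝ) * |Kw n y| = |SS n y| := by
  have hn' : (0:ℝ) < (n:ℝ) := by exact_mod_cast hn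
  unfold Kw
  rw [sum_Icc_Dw, abs_mul, abs_of_pos (by positivity : (0:ℝ) < 1/(n:ℝ))]
  field_simp

lemma abs_SS_le (n : ℕ) (y : WG) : |SS n y| ≤ (n : ℝ) * n := by
  unfold SS
  calc |∑ i ∈ range n, ((n : ℝ) - i) * walsh i y|
      ≤ ∑ i ∈ range n, |((n : ℝ) - i) * walsh i y| := Finset.abs_sum_le_sum_abs _ _
  _ ≤ ∑ i ∈ range n, (n : ℝ) := by
      apply Finset.sum_le_sum
      intro i hi
      have hin : (i:ℝ) < (n:ℝ) := by exact_mod_cast Finset.mem_range.1 hi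
      have hi0 : (0:ℝ) ≤ (i:ℝ) := by positivity
      rw [abs_mul, abs_walsh, mul_one]
      rw [abs_of_nonneg (by linarith)]
      linarith
  _ = (n : ℝ) * n := by rw [Finset.sum_const, Finset.card_range, nsmul_eq_mul]

lemma measurable_val_coord (k : ℕ) : Measurable (fun x : WG => (x k).val) :=
  (measurable_from_top (f := fun v : ZMod 2 => v.val)).comp (measurable_pi_apply k)

lemma measurable_walsh (n : ℕ) : Measurable (walsh n) := by
  unfold walsh
  apply (measurable_from_top (f := fun s : ℕ => (-1 : ℝ) ^ s)).comp
  apply Finset.measurable_sum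
  intro k _
  by_cases h : n.testBit k
  · simpa [h] using measurable_val_coord k
  · simp only [h]
    simp

lemma measurable_SS (n : ℕ) : Measurable (SS n) := by
  unfold SS
  apply Finset.measurable_sum
  intro i _
  exact (measurable_walsh i).const_mul _

lemma measurable_tau (N : ℕ) : Measurable (tau N) := by
  apply measurable_pi_lambda
  intro k
  unfold tau
  by_cases h : k < N
  · simp only [if_pos h]
    exact measurable_pi_apply _
  · simp only [if_neg h]
    exact measurable_pi_apply _

lemma measurableSet_cyl (N : ℕ) (z : WG) : MeasurableSet (cyl N z) := by
  have h : cyl N z = ⋂ (k : ℕ), ⋂ (_ : k < N), {y : WG | y k = z k} := by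
    ext y; simp [cyl]
  rw [h]
  refine MeasurableSet.iInter fun k => MeasurableSet.iInter fun _ => ?_
  have h2 : {y : WG | y k = z k} = (fun y : WG => y k) ⁻¹' {z k} := rfl
  rw [h2]
  exact measurable_pi_apply k (MeasurableSet.singleton _)

/-- A "band" set: coordinates in `[n, N)` are prescribed by `p`. -/
def band (n N : ℕ) (p : WG) : Set WG := {x | ∀ j, n ≤ j → j < N → x j = p j}

lemma measurableSet_band (n N : ℕ) (p : WG) : MeasurableSet (band n N p) := by
  have h : band n N p
      = ⋂ (j : ℕ), ⋂ (_ : n ≤ j), ⋂ (_ : j < N), {x : WG | x j = p j} := by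
    ext x; simp [band]
  rw [h]
  refine MeasurableSet.iInter fun j => MeasurableSet.iInter fun _ =>
    MeasurableSet.iInter fun _ => ?_
  have h2 : {x : WG | x j = p j} = (fun x : WG => x j) ⁻¹' {p j} := rfl
  rw [h2]
  exact measurable_pi_apply j (MeasurableSet.singleton _)

lemma band_eq_iUnion (n N : ℕ) (p : WG) :
    band n N p = ⋃ (v : Fin n → ZMod 2),
      cyl N (fun j => if h : j < n then v ⟨j, h⟩ else p j) := by
  ext x
  simp only [band, Set.mem_setOf_eq, Set.mem_iUnion, cyl]
  constructor
  · intro hx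
    refine ⟨fun k => x k, fun k hk => ?_⟩
    by_cases hkn : k < n
    · simp [hkn]
    · rw [dif_neg hkn]
      exact hx k (by omega) hk
  · rintro ⟨v, hv⟩ j hnj hjN
    have h := hv j hjN
    rw [h, dif_neg (by omega)]

lemma measure_band (μ : Measure WG) (hμ : IsHaar μ) {n N : ℕ} (h : n ≤ N) (p : WG) :
    μ (band n N p) = 2⁻¹ ^ (N - n) := by
  classical
  rw [band_eq_iUnion n N p]
  rw [measure_iUnion ?disj ?meas]
  case meas => exact fun v => measurableSet_cyl N _
  case disj =>
    intro v w hvw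
    rw [Function.onFun, Set.disjoint_left]
    intro x hxv hxw
    apply hvw
    funext k
    have h1 := hxv k.1 (lt_of_lt_of_le k.2 h)
    have h2 := hxw k.1 (lt_of_lt_of_le k.2 h)
    simp only [dif_pos k.2, Fin.eta] at h1 h2
    rw [← h1, ← h2]
  have hc : ∀ v : Fin n → ZMod 2,
      μ (cyl N (fun j => if h : j < n then v ⟨j, h⟩ else p j)) = 2⁻¹ ^ N :=
    fun v => hμ N _
  rw [tsum_congr hc, tsum_fintype, Finset.sum_const, Finset.card_univ]
  rw [Fintype.card_fun]
  have hcard : Fintype.card (ZMod 2) ^ Fintype.card (Fin n) = 2 ^ n := by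
    simp [ZMod.card 2]
  rw [hcard, nsmul_eq_mul]
  obtain ⟨k, rfl⟩ : ∃ k, N = n + k := ⟨N - n, by omega⟩
  have hnk : n + k - n = k := by omega
  rw [hnk, pow_add]
  push_cast
  rw [← mul_assoc, ← mul_pow, ENNReal.mul_inv_cancel two_ne_zero ENNReal.ofNat_ne_top,
    one_pow, one_mul]

/-- The pattern of the set `F_{A,m}` (in `x`-coordinates, i.e. before reversal). -/
def patF (A m : ℕ) : WG := fun j =>
  if j = 2 * A - 3 - 2 * m ∨ j = 2 * A - 1 - 2 * m then 1 else 0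

def Fset (A m : ℕ) : Set WG := band (2 * A - 3 - 2 * m) (2 * A) (patF A m)

lemma measurableSet_Fset (A m : ℕ) : MeasurableSet (Fset A m) :=
  measurableSet_band _ _ _

lemma measure_Fset (μ : Measure WG) (hμ : IsHaar μ) {A m : ℕ} (h : m + 2 ≤ A) :
    μ (Fset A m) = 2⁻¹ ^ (2 * m + 3) := by
  rw [Fset, measure_band μ hμ (by omega) _]
  congr 1
  omega

lemma tau_mem_pattern {A m : ℕ} (h : m + 2 ≤ A) {x : WG} (hx : x ∈ Fset A m) :
    ∀ t, t ≤ 2 * m + 2 →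
      tau (2 * A) x t = if t = 2 * m ∨ t = 2 * m + 2 then 1 else 0 := by
  intro t ht
  have h1 : t < 2 * A := by omega
  have h2 : tau (2 * A) x t = x (2 * A - 1 - t) := by unfold tau; rw [if_pos h1]
  rw [h2]
  have h3 := hx (2 * A - 1 - t) (by omega) (by omega)
  rw [h3]
  unfold patF
  have hiff : (2 * A - 1 - t = 2 * A - 3 - 2 * m ∨ 2 * A - 1 - t = 2 * A - 1 - 2 * m)
      ↔ (t = 2 * m ∨ t = 2 * m + 2) := by omega
  rw [if_congr hiff rfl rfl]

lemma Fset_disjoint_aux {A m1 m2 : ℕ} (h1 : m1 + 2 ≤ A) (h2 : m2 + 2 ≤ A)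
    (hlt : m1 < m2) {x : WG} (hx1 : x ∈ Fset A m1) (hx2 : x ∈ Fset A m2) : False := by
  have e1 : x (2 * A - 1 - 2 * m1) = patF A m1 (2 * A - 1 - 2 * m1) :=
    hx1 _ (by omega) (by omega)
  have e2 : x (2 * A - 1 - 2 * m1) = patF A m2 (2 * A - 1 - 2 * m1) :=
    hx2 _ (by omega) (by omega)
  have p1 : patF A m1 (2 * A - 1 - 2 * m1) = 1 := by
    unfold patF; rw [if_pos (Or.inr rfl)]
  have p2 : patF A m2 (2 * A - 1 - 2 * m1) = 0 := by
    unfold patF; rw [if_neg (by omega)]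
  rw [p1] at e1
  rw [p2] at e2
  exact one_ne_zero (e1.symm.trans e2)

lemma Fset_disjoint {A m1 m2 : ℕ} (h1 : m1 + 2 ≤ A) (h2 : m2 + 2 ≤ A)
    (hne : m1 ≠ m2) : Disjoint (Fset A m1) (Fset A m2) := by
  rw [Set.disjoint_left]
  intro x hx1 hx2
  rcases lt_or_gt_of_ne hne with hlt | hgt
  · exact Fset_disjoint_aux h1 h2 hlt hx1 hx2
  · exact Fset_disjoint_aux h2 h1 hgt hx2 hx1

end FejerLB

/-- For `A = 2^{i-1}`, `i ≥ 3`: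
`∫_G |q_{A-1} K_{q_{A-1}}^w(τ_{2A}(x))|^{1/2} dμ(x) ≥ c·A`. -/
theorem fejer_integral_lower_bound (μ : Measure WG) (hμ : IsHaar μ) :
    ∃ c : ℝ, 0 < c ∧ ∀ i : ℕ, 3 ≤ i →
      c * (2 ^ (i - 1) : ℕ) ≤
        ∫ x, Real.sqrt
          ((qq (2 ^ (i - 1) - 1) : ℝ) * |Kw (qq (2 ^ (i - 1) - 1)) (tau (2 * 2 ^ (i - 1)) x)|)
          ∂μ := by
  classical
  refine ⟨1/32, by norm_num, ?_⟩
  intro i hi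
  set A : ℕ := 2 ^ (i - 1) with hA
  have hA4 : 4 ≤ A := by
    have h22 : (2:ℕ) ^ 2 ≤ 2 ^ (i - 1) := Nat.pow_le_pow_right (by norm_num) (by omega)
    simpa [hA] using h22
  set N : ℕ := 2 * A with hN
  set q : ℕ := qq (A - 1) with hq
  haveI : IsFiniteMeasure μ := ⟨by
    have h0 : (Set.univ : Set WG) = cyl 0 (fun _ => 0) := by
      ext y; simp [cyl]
    rw [h0, hμ 0 _]
    norm_num⟩
  have hqpos : 0 < q := FejerLB.qq_pos _
  set f : WG → ℝ := fun x => Real.sqrt (|FejerLB.SS q (tau N x)|) with hf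
  have hfi : ∀ x : WG, Real.sqrt ((q:ℝ) * |Kw q (tau N x)|) = f x := fun x => by
    rw [hf]
    rw [FejerLB.q_mul_Kw hqpos]
  rw [show (∫ x, Real.sqrt ((q:ℝ) * |Kw q (tau N x)|) ∂μ) = ∫ x, f x ∂μ from by
    simp only [hfi]]
  have hmeasSS : Measurable (fun x => FejerLB.SS q (tau N x)) :=
    (FejerLB.measurable_SS q).comp (FejerLB.measurable_tau N)
  have hfm : Measurable f := Real.continuous_sqrt.measurable.comp hmeasSS.abs
  have hfnn : ∀ x, 0 ≤ f x := fun x => Real.sqrt_nonneg _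
  have hfbd : ∀ x, f x ≤ (q:ℝ) := by
    intro x
    have h1 : |FejerLB.SS q (tau N x)| ≤ (q:ℝ) * q := FejerLB.abs_SS_le q _
    calc f x ≤ Real.sqrt ((q:ℝ) * q) := Real.sqrt_le_sqrt h1
    _ = (q:ℝ) := Real.sqrt_mul_self (by positivity)
  have hfint : MeasureTheory.Integrable f μ := by
    refine MeasureTheory.Integrable.mono' (MeasureTheory.integrable_const (μ := μ) ((q:ℝ)))
      hfm.aestronglyMeasurable ?_
    filter_upwards with x
    rw [Real.norm_eq_abs, abs_of_nonneg (hfnn x)]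
    exact hfbd x
  set g : WG → ℝ := fun x => ∑ m ∈ Finset.range (A - 1),
    (2:ℝ) ^ (2 * m) * Set.indicator (FejerLB.Fset A m) (fun _ => (1:ℝ)) x with hg
  have hFm : ∀ m, MeasurableSet (FejerLB.Fset A m) := fun m => FejerLB.measurableSet_Fset A m
  have htermint : ∀ m : ℕ, MeasureTheory.Integrable
      (fun x => (2:ℝ) ^ (2 * m) * Set.indicator (FejerLB.Fset A m) (fun _ => (1:ℝ)) x) μ := by
    intro m
    have := ((MeasureTheory.integrable_const (μ := μ) (1:ℝ)).indicator (hFm m)).const_mul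
      ((2:ℝ) ^ (2 * m))
    simpa using this
  have hgint : MeasureTheory.Integrable g μ := by
    rw [hg]
    exact MeasureTheory.integrable_finset_sum _ (fun m _ => htermint m)
  have hgle : g ≤ f := by
    intro x
    by_cases hex : ∃ m ∈ Finset.range (A - 1), x ∈ FejerLB.Fset A m
    · obtain ⟨m0, hm0r, hm0⟩ := hex
      have hm0A : m0 + 2 ≤ A := by
        have := Finset.mem_range.1 hm0r; omega
      have hsum : g x = (2:ℝ) ^ (2 * m0) := by
        simp only [hg]
        rw [Finset.sum_eq_single m0 ?h1 ?h2]
        · rw [Set.indicator_of_mem hm0, mul_one]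
        case h1 =>
          intro m hmr hmne
          have hmA : m + 2 ≤ A := by
            have := Finset.mem_range.1 hmr; omega
          have hdisj := FejerLB.Fset_disjoint hmA hm0A hmne
          have hnotmem : x ∉ FejerLB.Fset A m := fun hmem =>
            (Set.disjoint_left.1 hdisj hmem) hm0
          rw [Set.indicator_of_notMem hnotmem, mul_zero]
        case h2 =>
          intro hcon
          exact absurd hm0r hcon
      rw [hsum]
      show (2:ℝ) ^ (2 * m0) ≤ f x
      have hy := FejerLB.tau_mem_pattern hm0A hm0
      have hbig : (16:ℝ) ^ m0 ≤ |FejerLB.SS q (tau N x)| := by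
        rw [hq]
        exact FejerLB.SS_qq_big hy (A - 1) (by omega)
      calc (2:ℝ) ^ (2 * m0) = Real.sqrt ((16:ℝ) ^ m0) := by
            rw [show (16:ℝ) ^ m0 = ((2:ℝ) ^ (2 * m0)) ^ 2 from by
              rw [← pow_mul, show 2 * m0 * 2 = 4 * m0 by ring, pow_mul]
              norm_num]
            rw [Real.sqrt_sq (by positivity)]
      _ ≤ f x := Real.sqrt_le_sqrt hbig
    · have hzero : g x = 0 := by
        rw [hg]
        apply Finset.sum_eq_zero
        intro m hm
        rw [Set.indicator_of_notMem (fun hmem => hex ⟨m, hm, hmem⟩), mul_zero]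
      rw [hzero]
      exact hfnn x
  have hint : ∫ x, g x ∂μ = ((A - 1 : ℕ) : ℝ) * (1/8 : ℝ) := by
    simp only [hg]
    rw [MeasureTheory.integral_finset_sum _ (fun m _ => htermint m)]
    have hterm : ∀ m ∈ Finset.range (A - 1),
        (∫ x, (2:ℝ) ^ (2 * m) * Set.indicator (FejerLB.Fset A m) (fun _ => (1:ℝ)) x ∂μ)
          = 1/8 := by
      intro m hm
      have hmA : m + 2 ≤ A := by
        have := Finset.mem_range.1 hm; omega
      rw [MeasureTheory.integral_const_mul]
      rw [MeasureTheory.integral_indicator_const (1:ℝ) (hFm m)]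
      rw [measureReal_def, FejerLB.measure_Fset μ hμ hmA]
      have hc : (((2:ℝ≥0∞))⁻¹ ^ (2 * m + 3)).toReal = ((2:ℝ))⁻¹ ^ (2 * m + 3) := by
        rw [ENNReal.toReal_pow, ENNReal.toReal_inv]
        norm_num
      rw [hc, smul_eq_mul, mul_one]
      rw [show ((2:ℝ))⁻¹ ^ (2 * m + 3) = (2:ℝ)⁻¹ ^ (2 * m) * (2:ℝ)⁻¹ ^ 3 from by
        rw [pow_add]]
      have hone : (2:ℝ) ^ (2 * m) * (2:ℝ)⁻¹ ^ (2 * m) = 1 := by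
        rw [← mul_pow]
        norm_num
      rw [← mul_assoc, hone]
      norm_num
    rw [Finset.sum_congr rfl hterm, Finset.sum_const, Finset.card_range, nsmul_eq_mul]
  have hmono := MeasureTheory.integral_mono hgint hfint hgle
  rw [hint] at hmono
  have hcast : ((A - 1 : ℕ) : ℝ) = (A:ℝ) - 1 := by
    rw [Nat.cast_sub (by omega)]
    norm_num
  have hAr : (4:ℝ) ≤ (A:ℝ) := by exact_mod_cast hA4
  calc (1/32 : ℝ) * (A:ℝ) ≤ ((A - 1 : ℕ) : ℝ) * (1/8) := by
        rw [hcast]; linarith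
  _ ≤ ∫ x, f x ∂μ := hmono

end
end
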